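/- arXiv:1412.3792 — 2 statements merged into one kernel-verified Lean document; each statement's English description precedes it below -/
import Mathlib

section
/- Let Γ be a distance-regular graph of degree k and diameter D. Then there exist positive real numbers s_0^+, …, s_{D−1}^+ and s_1^−, …, s_D^− such that for every vertex x and every Delsarte clique C at distance i from x (0 ≤ i ≤ D−1), one has |Γ_i(x) ∩ C| = s_i^+ and |Γ_{i+1}(x) ∩ C| = s_{i+1}^−; in particular these two cardinalities depend only on i. -/
open scoped Classical

namespace CliqueBitradeAux

open Finset SimpleGraph

variable {V : Type*}

private lemma card_eq_of_ncard [Fintype V] {P : V → Prop} [DecidablePred P] {n : ℕ}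
    (h : {z | P z}.ncard = n) : (Finset.univ.filter P).card = n := by
  rw [← h]
  have he : {z | P z} = ↑(Finset.univ.filter P) := by ext z; simp
  rw [he, Set.ncard_coe_finset]

private lemma swap_sum [Fintype V] (s : Finset V) (Q : V → V → Prop)
    [∀ y, DecidablePred (Q y)] [∀ w, DecidablePred (fun y => Q y w)] (h : V → ℝ) :
    ∑ y ∈ s, ∑ w ∈ Finset.univ.filter (Q y), h w
      = ∑ w, h w * ((s.filter (fun y => Q y w)).card : ℝ) := by
  have step1 : ∀ y, ∑ w ∈ Finset.univ.filter (Q y), h w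
      = ∑ w, if Q y w then h w else 0 := by
    intro y
    rw [Finset.sum_filter]
  rw [Finset.sum_congr rfl (fun y _ => step1 y), Finset.sum_comm]
  apply Finset.sum_congr rfl
  intro w _
  rw [← Finset.sum_filter, Finset.sum_const, nsmul_eq_mul, mul_comm]

/-- Context bundling all hypotheses for the main development. -/
structure Ctx (V : Type*) [Fintype V] where
  G : SimpleGraph V
  D : ℕ
  k : ℕ
  b : ℕ → ℕ
  c : ℕ → ℕ
  θ : ℝ
  conn : G.Connected
  distle : ∀ x y, G.dist x y ≤ D
  distD : ∃ x y, G.dist x y = D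
  bD : b D = 0
  c0 : c 0 = 0
  DR : ∀ i ≤ D, ∀ x y, G.dist x y = i →
    {z | G.Adj y z ∧ G.dist x z = i + 1}.ncard = b i ∧
    (1 ≤ i → {z | G.Adj y z ∧ G.dist x z = i - 1}.ncard = c i)
  reg : ∀ v, (G.neighborSet v).ncard = k
  hD : 1 ≤ D
  emin : ∃ f : V → ℝ, f ≠ 0 ∧ ∀ x : V, ∑ᶠ y ∈ G.neighborSet x, f y = θ * f x
  lmin : ∀ θ' : ℝ, (∃ f : V → ℝ, f ≠ 0 ∧ ∀ x : V, ∑ᶠ y ∈ G.neighborSet x, f y = θ' * f x) → θ ≤ θ'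

namespace Ctx

variable [Fintype V] (X : Ctx V)

include X in
lemma nonemptyV : Nonempty V := by
  obtain ⟨-, h⟩ := (SimpleGraph.connected_iff _).mp X.conn
  exact h

lemma countB {i : ℕ} {x y : V} (hi : i ≤ X.D) (hxy : X.G.dist x y = i) :
    (Finset.univ.filter fun z => X.G.Adj y z ∧ X.G.dist x z = i + 1).card = X.b i := by
  exact card_eq_of_ncard (X.DR i hi x y hxy).1

lemma countC {i : ℕ} {x y : V} (hi : i ≤ X.D) (h1 : 1 ≤ i) (hxy : X.G.dist x y = i) :
    (Finset.univ.filter fun z => X.G.Adj y z ∧ X.G.dist x z = i - 1).card = X.c i := by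
  exact card_eq_of_ncard ((X.DR i hi x y hxy).2 h1)

lemma degree_eq (y : V) : (Finset.univ.filter (X.G.Adj y)).card = X.k := by
  have h := X.reg y
  rw [Set.ncard_eq_toFinset_card'] at h
  rw [← h]
  congr 1
  ext z
  simp

/-- Adjacent vertices are at distance at most one more. -/
lemma dist_le_succ_of_adj {x y z : V} (h : X.G.Adj y z) :
    X.G.dist x z ≤ X.G.dist x y + 1 := by
  have := X.conn.dist_triangle (u := x) (v := y) (w := z)
  have h1 : X.G.dist y z = 1 := SimpleGraph.dist_eq_one_iff_adj.2 h
  omega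

lemma dist_ge_pred_of_adj {x y z : V} (h : X.G.Adj y z) :
    X.G.dist x y ≤ X.G.dist x z + 1 := by
  have := X.conn.dist_triangle (u := x) (v := z) (w := y)
  have h1 : X.G.dist z y = 1 := SimpleGraph.dist_eq_one_iff_adj.2 h.symm
  omega

lemma dist_getVert_le {v w : V} (p : X.G.Walk v w) (i : ℕ) :
    X.G.dist v (p.getVert i) ≤ i := by
  induction i with
  | zero => simp [SimpleGraph.Walk.getVert_zero]
  | succ n ih =>
    by_cases hn : n < p.length
    · have hadj := p.adj_getVert_succ hn
      have := X.dist_le_succ_of_adj (x := v) hadj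
      omega
    · have h1 : p.getVert (n+1) = w := p.getVert_of_length_le (by omega)
      have h2 : p.getVert n = w := p.getVert_of_length_le (by omega)
      rw [h1, ← h2]
      omega

lemma geodesic_getVert {v w : V} (p : X.G.Walk v w) (hlen : p.length = X.G.dist v w)
    {i : ℕ} (hi : i ≤ p.length) :
    X.G.dist v (p.getVert i) = i ∧ X.G.dist (p.getVert i) w = p.length - i := by
  have le1 : X.G.dist v (p.getVert i) ≤ i := X.dist_getVert_le p i
  have le2 : X.G.dist (p.getVert i) w ≤ p.length - i := by
    have hrev : p.reverse.getVert (p.length - i) = p.getVert i := by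
      rw [SimpleGraph.Walk.getVert_reverse]
      congr 1
      omega
    have := X.dist_getVert_le p.reverse (p.length - i)
    rw [hrev] at this
    calc X.G.dist (p.getVert i) w = X.G.dist w (p.getVert i) := SimpleGraph.dist_comm ..
    _ ≤ p.length - i := this
  have tri : X.G.dist v w ≤ X.G.dist v (p.getVert i) + X.G.dist (p.getVert i) w :=
    X.conn.dist_triangle
  omega

/-- a vertex from which every distance `≤ D` is realized -/
lemma reach : ∃ x₀ : V, ∀ i ≤ X.D, ∃ y, X.G.dist x₀ y = i := by
  obtain ⟨x, y, hxy⟩ := X.distD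
  obtain ⟨p, hp⟩ := X.conn.exists_walk_length_eq_dist x y
  refine ⟨x, fun i hi => ⟨p.getVert i, ?_⟩⟩
  exact (X.geodesic_getVert p hp (by omega)).1

lemma b0 : X.b 0 = X.k := by
  obtain ⟨y⟩ := X.nonemptyV
  have h := X.countB (i := 0) (x := y) (y := y) (by omega) (SimpleGraph.dist_self ..)
  rw [← h, ← X.degree_eq y]
  congr 1
  ext z
  simp only [mem_filter, mem_univ, true_and, and_iff_left_iff_imp]
  intro h
  exact SimpleGraph.dist_eq_one_iff_adj.2 h

lemma cpos {i : ℕ} (h1 : 1 ≤ i) (hi : i ≤ X.D) : 1 ≤ X.c i := by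
  obtain ⟨x₀, hx₀⟩ := X.reach
  obtain ⟨y, hy⟩ := hx₀ i hi
  obtain ⟨p, hp⟩ := X.conn.exists_walk_length_eq_dist x₀ y
  have hlen : p.length = i := hp.trans hy
  have hcount := X.countC hi h1 hy
  have hgv : p.getVert i = y := by rw [← hlen]; exact p.getVert_length
  have hadj : X.G.Adj y (p.getVert (i - 1)) := by
    have hadj := p.adj_getVert_succ (i := i - 1) (by omega)
    rw [show i - 1 + 1 = i by omega, hgv] at hadj
    exact hadj.symm
  have hdist : X.G.dist x₀ (p.getVert (i - 1)) = i - 1 :=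
    (X.geodesic_getVert p hp (by omega)).1
  have hmem : p.getVert (i - 1) ∈ Finset.univ.filter
      (fun z => X.G.Adj y z ∧ X.G.dist x₀ z = i - 1) := by
    simp only [mem_filter, mem_univ, true_and]
    exact ⟨hadj, hdist⟩
  have := Finset.card_pos.2 ⟨_, hmem⟩
  omega

lemma bpos {i : ℕ} (hi : i < X.D) : 1 ≤ X.b i := by
  obtain ⟨x₀, hx₀⟩ := X.reach
  obtain ⟨y, hy⟩ := hx₀ (i + 1) (by omega)
  obtain ⟨p, hp⟩ := X.conn.exists_walk_length_eq_dist x₀ y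
  have hlen : p.length = i + 1 := hp.trans hy
  have hw : X.G.dist x₀ (p.getVert i) = i := (X.geodesic_getVert p hp (by omega)).1
  have hcount := X.countB (i := i) (by omega) hw
  have hadj : X.G.Adj (p.getVert i) y := by
    have hadj := p.adj_getVert_succ (i := i) (by omega)
    have hgv : p.getVert (i + 1) = y := by rw [← hlen]; exact p.getVert_length
    rwa [hgv] at hadj
  have hmem : y ∈ Finset.univ.filter
      (fun z => X.G.Adj (p.getVert i) z ∧ X.G.dist x₀ z = i + 1) := by
    simp only [mem_filter, mem_univ, true_and]
    exact ⟨hadj, hy⟩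
  have := Finset.card_pos.2 ⟨_, hmem⟩
  omega

lemma nbr_card (y : V) : (X.G.neighborFinset y).card = X.k := by
  have h := X.reg y
  rwa [Set.ncard_eq_toFinset_card', ← SimpleGraph.neighborFinset_def] at h

/-- every neighbor is at distance d-1, d, or d+1 -/
lemma nbr_dist {x y z : V} (h : z ∈ X.G.neighborFinset y) :
    X.G.dist x z = X.G.dist x y - 1 ∨ X.G.dist x z = X.G.dist x y
      ∨ X.G.dist x z = X.G.dist x y + 1 := by
  rw [SimpleGraph.mem_neighborFinset] at h
  have h1 := X.dist_le_succ_of_adj (x := x) h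
  have h2 := X.dist_ge_pred_of_adj (x := x) h
  omega

lemma count3 {d : ℕ} {x y : V} (hdD : d ≤ X.D) (hd1 : 1 ≤ d) (hd : X.G.dist x y = d) :
    ((X.G.neighborFinset y).filter (fun z => X.G.dist x z = d - 1)).card = X.c d ∧
    (((X.G.neighborFinset y).filter (fun z => X.G.dist x z = d)).card : ℝ)
      = (X.k : ℝ) - X.b d - X.c d ∧
    ((X.G.neighborFinset y).filter (fun z => X.G.dist x z = d + 1)).card = X.b d := by
  have hm : ((X.G.neighborFinset y).filter (fun z => X.G.dist x z = d - 1)).card = X.c d := by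
    rw [← X.countC hdD hd1 hd]
    apply congrArg Finset.card
    apply Finset.ext
    intro z
    simp only [Finset.mem_filter, SimpleGraph.mem_neighborFinset, Finset.mem_univ, true_and]
  have hp : ((X.G.neighborFinset y).filter (fun z => X.G.dist x z = d + 1)).card = X.b d := by
    rw [← X.countB hdD hd]
    apply congrArg Finset.card
    apply Finset.ext
    intro z
    simp only [Finset.mem_filter, SimpleGraph.mem_neighborFinset, Finset.mem_univ, true_and]
  have e2 : ((X.G.neighborFinset y).filter (fun z => ¬ X.G.dist x z = d - 1)).filter
      (fun z => X.G.dist x z = d)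
      = (X.G.neighborFinset y).filter (fun z => X.G.dist x z = d) := by
    apply Finset.ext; intro z
    simp only [Finset.mem_filter, and_assoc]
    constructor
    · rintro ⟨h1, h2, h3⟩; exact ⟨h1, h3⟩
    · rintro ⟨h1, h3⟩; exact ⟨h1, by omega, h3⟩
  have e3 : ((X.G.neighborFinset y).filter (fun z => ¬ X.G.dist x z = d - 1)).filter
      (fun z => ¬ X.G.dist x z = d)
      = (X.G.neighborFinset y).filter (fun z => X.G.dist x z = d + 1) := by
    apply Finset.ext; intro z
    simp only [Finset.mem_filter, and_assoc]
    constructor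
    · rintro ⟨h1, h2, h3⟩
      refine ⟨h1, ?_⟩
      have hnd := X.nbr_dist (x := x) h1
      rw [hd] at hnd
      omega
    · rintro ⟨h1, h3⟩
      exact ⟨h1, by omega, by omega⟩
  have t1 := Finset.card_filter_add_card_filter_not
    (s := X.G.neighborFinset y) (p := fun z => X.G.dist x z = d - 1)
  have t2 := Finset.card_filter_add_card_filter_not
    (s := (X.G.neighborFinset y).filter (fun z => ¬ X.G.dist x z = d - 1))
    (p := fun z => X.G.dist x z = d)
  rw [e2, e3] at t2
  rw [X.nbr_card y, hm] at t1
  refine ⟨hm, ?_, hp⟩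
  have hsum : X.c d + ((((X.G.neighborFinset y).filter (fun z => X.G.dist x z = d)).card)
      + X.b d) = X.k := by omega
  rw [← hsum]
  push_cast
  ring

lemma dist_zero_eq {x y : V} (h : X.G.dist x y = 0) : x = y :=
  (X.conn.dist_eq_zero_iff).mp h

lemma part (F : ℕ → ℝ) {x y : V} {d : ℕ} (hd : X.G.dist x y = d) (hdD : d ≤ X.D) :
    ∑ z ∈ X.G.neighborFinset y, F (X.G.dist x z)
      = (X.c d : ℝ) * F (d - 1) + ((X.k : ℝ) - X.b d - X.c d) * F d
        + (X.b d : ℝ) * F (d + 1) := by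
  by_cases hd0 : d = 0
  · subst hd0
    have hxy : x = y := X.dist_zero_eq hd
    subst hxy
    have hall : ∀ z ∈ X.G.neighborFinset x, F (X.G.dist x z) = F 1 := by
      intro z hz
      rw [SimpleGraph.mem_neighborFinset] at hz
      rw [SimpleGraph.dist_eq_one_iff_adj.2 hz]
    rw [Finset.sum_congr rfl hall, Finset.sum_const, X.nbr_card, X.c0, X.b0]
    push_cast
    ring
  · have hd1 : 1 ≤ d := by omega
    obtain ⟨hm, hmid, hp⟩ := X.count3 hdD hd1 hd
    -- split the sum into three parts
    rw [← Finset.sum_filter_add_sum_filter_not (X.G.neighborFinset y)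
      (fun z => X.G.dist x z = d - 1)]
    rw [← Finset.sum_filter_add_sum_filter_not
      ((X.G.neighborFinset y).filter (fun z => ¬ X.G.dist x z = d - 1))
      (fun z => X.G.dist x z = d)]
    have e1 : ∑ z ∈ (X.G.neighborFinset y).filter (fun z => X.G.dist x z = d - 1),
        F (X.G.dist x z) = (X.c d : ℝ) * F (d - 1) := by
      rw [Finset.sum_congr rfl (fun z hz => by rw [(Finset.mem_filter.mp hz).2]),
        Finset.sum_const, hm, nsmul_eq_mul]
    have heq2 : ((X.G.neighborFinset y).filter (fun z => ¬ X.G.dist x z = d - 1)).filter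
        (fun z => X.G.dist x z = d)
        = (X.G.neighborFinset y).filter (fun z => X.G.dist x z = d) := by
      apply Finset.ext; intro z
      simp only [Finset.mem_filter, and_assoc]
      constructor
      · rintro ⟨h1, h2, h3⟩; exact ⟨h1, h3⟩
      · rintro ⟨h1, h3⟩; exact ⟨h1, by omega, h3⟩
    have heq3 : (((X.G.neighborFinset y).filter (fun z => ¬ X.G.dist x z = d - 1)).filter
        (fun z => ¬ X.G.dist x z = d))
        = (X.G.neighborFinset y).filter (fun z => X.G.dist x z = d + 1) := by
      apply Finset.ext; intro z
      simp only [Finset.mem_filter, and_assoc]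
      constructor
      · rintro ⟨h1, h2, h3⟩
        refine ⟨h1, ?_⟩
        have hnd := X.nbr_dist (x := x) h1
        rw [hd] at hnd
        omega
      · rintro ⟨h1, h3⟩
        exact ⟨h1, by omega, by omega⟩
    have e2 : ∑ z ∈ ((X.G.neighborFinset y).filter (fun z => ¬ X.G.dist x z = d - 1)).filter
        (fun z => X.G.dist x z = d), F (X.G.dist x z)
        = ((X.k : ℝ) - X.b d - X.c d) * F d := by
      rw [heq2, Finset.sum_congr rfl (fun z hz => by rw [(Finset.mem_filter.mp hz).2]),
        Finset.sum_const, nsmul_eq_mul, hmid]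
    have e3 : ∑ z ∈ (((X.G.neighborFinset y).filter (fun z => ¬ X.G.dist x z = d - 1)).filter
        (fun z => ¬ X.G.dist x z = d)), F (X.G.dist x z)
        = (X.b d : ℝ) * F (d + 1) := by
      rw [heq3, Finset.sum_congr rfl (fun z hz => by rw [(Finset.mem_filter.mp hz).2]),
        Finset.sum_const, hp, nsmul_eq_mul]
    rw [e1, e2, e3]
    ring


lemma count_gamma (x w : V) (j : ℕ) :
    (((X.G.neighborFinset w).filter (fun y => X.G.dist x y = j)).card : ℝ)
      = (if X.G.dist x w + 1 = j then (X.b (X.G.dist x w) : ℝ) else 0)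
      + (if X.G.dist x w = j then (X.k : ℝ) - X.b j - X.c j else 0)
      + (if X.G.dist x w = j + 1 then (X.c (X.G.dist x w) : ℝ) else 0) := by
  set e := X.G.dist x w with he
  have heD : e ≤ X.D := X.distle x w
  by_cases h1 : e + 1 = j
  · rw [if_pos h1, if_neg (by omega), if_neg (by omega)]
    have hcb : ((X.G.neighborFinset w).filter (fun y => X.G.dist x y = j)).card = X.b e := by
      rw [← X.countB heD he.symm]
      apply congrArg Finset.card
      apply Finset.ext
      intro z
      simp only [Finset.mem_filter, SimpleGraph.mem_neighborFinset, Finset.mem_univ, true_and,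
        ← h1]
    rw [hcb]
    ring
  · by_cases h2 : e = j
    · rw [if_neg h1, if_pos h2, if_neg (by omega)]
      by_cases h0 : e = 0
      · -- w = x, no neighbor at distance 0
        have hxw : x = w := X.dist_zero_eq (by omega)
        have : ((X.G.neighborFinset w).filter (fun y => X.G.dist x y = j)).card = 0 := by
          rw [Finset.card_eq_zero]
          apply Finset.eq_empty_of_forall_notMem
          intro z hz
          rw [Finset.mem_filter, SimpleGraph.mem_neighborFinset] at hz
          have : x = z := X.dist_zero_eq (by omega)
          subst this
          subst hxw
          exact X.G.loopless.irrefl x hz.1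
        rw [this, ← h2, h0, X.b0, X.c0]
        push_cast
        ring
      · have := (X.count3 heD (by omega) he.symm).2.1
        rw [h2] at this
        rw [this]
        ring
    · by_cases h3 : e = j + 1
      · rw [if_neg h1, if_neg h2, if_pos h3]
        have hcc : ((X.G.neighborFinset w).filter (fun y => X.G.dist x y = j)).card = X.c e := by
          rw [← X.countC heD (by omega) he.symm]
          apply congrArg Finset.card
          apply Finset.ext
          intro z
          simp only [Finset.mem_filter, SimpleGraph.mem_neighborFinset, Finset.mem_univ, true_and]
          have : e - 1 = j := by omega
          rw [this]
        rw [hcc]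
        ring
      · rw [if_neg h1, if_neg h2, if_neg h3]
        have : ((X.G.neighborFinset w).filter (fun y => X.G.dist x y = j)).card = 0 := by
          rw [Finset.card_eq_zero]
          apply Finset.eq_empty_of_forall_notMem
          intro z hz
          rw [Finset.mem_filter] at hz
          have hnd := X.nbr_dist (x := x) hz.1
          rw [← he] at hnd
          have := hz.2
          omega
        rw [this]
        push_cast
        ring

/-- The sphere of radius `e` around `x`. -/
noncomputable def Sph (x : V) (e : ℕ) : Finset V :=
  Finset.univ.filter (fun y => X.G.dist x y = e)

lemma mem_Sph {x y : V} {e : ℕ} : y ∈ X.Sph x e ↔ X.G.dist x y = e := by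
  simp [Sph]

lemma Sph_eq_empty {x : V} {e : ℕ} (he : X.D < e) : X.Sph x e = ∅ := by
  apply Finset.eq_empty_of_forall_notMem
  intro z hz
  rw [mem_Sph] at hz
  have := X.distle x z
  omega

lemma Sph_zero (x : V) : X.Sph x 0 = {x} := by
  apply Finset.ext
  intro z
  rw [mem_Sph, Finset.mem_singleton]
  constructor
  · intro h; exact (X.dist_zero_eq h).symm
  · intro h; subst h; exact SimpleGraph.dist_self

lemma Sph_one (x : V) : X.Sph x 1 = X.G.neighborFinset x := by
  apply Finset.ext
  intro z
  rw [mem_Sph, SimpleGraph.mem_neighborFinset]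
  exact SimpleGraph.dist_eq_one_iff_adj

lemma rws (x : V) (F : ℕ → ℝ) (h : V → ℝ) :
    ∑ w, F (X.G.dist x w) * h w
      = ∑ e ∈ Finset.range (X.D + 1), F e * ∑ w ∈ X.Sph x e, h w := by
  have : ∀ e ∈ Finset.range (X.D + 1), F e * ∑ w ∈ X.Sph x e, h w
      = ∑ w ∈ Finset.univ.filter (fun w => X.G.dist x w = e), F (X.G.dist x w) * h w := by
    intro e _
    rw [Finset.mul_sum]
    apply Finset.sum_congr rfl
    intro w hw
    rw [X.mem_Sph] at hw
    rw [hw]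
  rw [Finset.sum_congr rfl this]
  refine (Finset.sum_fiberwise_of_maps_to ?_ _).symm
  intro w _
  rw [Finset.mem_range]
  have := X.distle x w
  omega

lemma gamma_sum (x : V) (j : ℕ) (hj1 : 1 ≤ j) (hjD : j ≤ X.D) (h : V → ℝ) :
    ∑ w, ((if X.G.dist x w + 1 = j then (X.b (X.G.dist x w) : ℝ) else 0)
      + (if X.G.dist x w = j then (X.k : ℝ) - X.b j - X.c j else 0)
      + (if X.G.dist x w = j + 1 then (X.c (X.G.dist x w) : ℝ) else 0)) * h w
      = (X.b (j-1) : ℝ) * (∑ y ∈ X.Sph x (j-1), h y)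
        + ((X.k : ℝ) - X.b j - X.c j) * (∑ y ∈ X.Sph x j, h y)
        + (X.c (j+1) : ℝ) * (∑ y ∈ X.Sph x (j+1), h y) := by
  set γ : ℕ → ℝ := fun e => (if e + 1 = j then (X.b e : ℝ) else 0)
      + (if e = j then (X.k : ℝ) - X.b j - X.c j else 0)
      + (if e = j + 1 then (X.c e : ℝ) else 0) with hγ
  have h0 : ∀ w : V, ((if X.G.dist x w + 1 = j then (X.b (X.G.dist x w) : ℝ) else 0)
      + (if X.G.dist x w = j then (X.k : ℝ) - X.b j - X.c j else 0)
      + (if X.G.dist x w = j + 1 then (X.c (X.G.dist x w) : ℝ) else 0)) * h w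
      = γ (X.G.dist x w) * h w := by
    intro w
    simp only [hγ]
  rw [Finset.sum_congr rfl (fun w _ => h0 w), X.rws x γ h]
  have expand : ∀ e ∈ Finset.range (X.D + 1), γ e * (∑ w ∈ X.Sph x e, h w)
      = (if e = j - 1 then (X.b e : ℝ) * (∑ w ∈ X.Sph x e, h w) else 0)
      + (if e = j then ((X.k : ℝ) - X.b j - X.c j) * (∑ w ∈ X.Sph x e, h w) else 0)
      + (if e = j + 1 then (X.c e : ℝ) * (∑ w ∈ X.Sph x e, h w) else 0) := by
    intro e _
    simp only [hγ]
    by_cases k1 : e + 1 = j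
    · have k1' : e = j - 1 := by omega
      have k2 : ¬ e = j := by omega
      have k3 : ¬ e = j + 1 := by omega
      rw [if_pos k1, if_pos k1', if_neg k2, if_neg k2, if_neg k3, if_neg k3]
      ring
    · have k1' : ¬ e = j - 1 := by omega
      by_cases k2 : e = j
      · have k3 : ¬ e = j + 1 := by omega
        rw [if_neg k1, if_neg k1', if_pos k2, if_pos k2, if_neg k3, if_neg k3]
        ring
      · by_cases k3 : e = j + 1
        · rw [if_neg k1, if_neg k1', if_neg k2, if_neg k2, if_pos k3, if_pos k3]
          ring
        · rw [if_neg k1, if_neg k1', if_neg k2, if_neg k2, if_neg k3, if_neg k3]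
          ring
  rw [Finset.sum_congr rfl expand]
  rw [Finset.sum_add_distrib, Finset.sum_add_distrib]
  rw [Finset.sum_ite_eq' (Finset.range (X.D+1)) (j-1)
    (fun e => (X.b e : ℝ) * (∑ w ∈ X.Sph x e, h w))]
  rw [Finset.sum_ite_eq' (Finset.range (X.D+1)) j
    (fun e => ((X.k : ℝ) - X.b j - X.c j) * (∑ w ∈ X.Sph x e, h w))]
  rw [Finset.sum_ite_eq' (Finset.range (X.D+1)) (j+1)
    (fun e => (X.c e : ℝ) * (∑ w ∈ X.Sph x e, h w))]
  rw [if_pos (Finset.mem_range.2 (by omega)), if_pos (Finset.mem_range.2 (by omega))]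
  by_cases hjD' : j + 1 ≤ X.D
  · rw [if_pos (Finset.mem_range.2 (by omega))]
  · have hempty : X.Sph x (j+1) = ∅ := X.Sph_eq_empty (by omega)
    rw [if_neg (by simp only [Finset.mem_range]; omega), hempty]
    simp

lemma sum_gamma (x : V) (j : ℕ) (hj1 : 1 ≤ j) (hjD : j ≤ X.D) (h : V → ℝ) :
    ∑ w, (((X.G.neighborFinset w).filter (fun y => X.G.dist x y = j)).card : ℝ) * h w
      = (X.b (j-1) : ℝ) * (∑ y ∈ X.Sph x (j-1), h y)
        + ((X.k : ℝ) - X.b j - X.c j) * (∑ y ∈ X.Sph x j, h y)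
        + (X.c (j+1) : ℝ) * (∑ y ∈ X.Sph x (j+1), h y) := by
  have hcount : ∀ w : V, (((X.G.neighborFinset w).filter
        (fun y => X.G.dist x y = j)).card : ℝ) * h w
      = ((if X.G.dist x w + 1 = j then (X.b (X.G.dist x w) : ℝ) else 0)
      + (if X.G.dist x w = j then (X.k : ℝ) - X.b j - X.c j else 0)
      + (if X.G.dist x w = j + 1 then (X.c (X.G.dist x w) : ℝ) else 0)) * h w := by
    intro w
    rw [X.count_gamma x w j]
  rw [Finset.sum_congr rfl (fun w _ => hcount w)]
  exact X.gamma_sum x j hj1 hjD h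

/-- sphere size -/
noncomputable def K (x : V) (e : ℕ) : ℕ := (X.Sph x e).card

lemma sphere_rec (x : V) {d : ℕ} (hd : d < X.D) :
    (X.K x d : ℝ) * X.b d = (X.K x (d+1) : ℝ) * X.c (d+1) := by
  have swapped := swap_sum (X.Sph x d)
    (fun y w => X.G.Adj y w ∧ X.G.dist x w = d + 1) (fun _ => (1:ℝ))
  simp only [one_mul] at swapped
  have lhse : ∑ y ∈ X.Sph x d, ∑ _w ∈ Finset.univ.filter
        (fun w => X.G.Adj y w ∧ X.G.dist x w = d + 1), (1:ℝ)
      = (X.K x d : ℝ) * X.b d := by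
    have hper : ∀ y ∈ X.Sph x d, ∑ _w ∈ Finset.univ.filter
        (fun w => X.G.Adj y w ∧ X.G.dist x w = d + 1), (1:ℝ) = (X.b d : ℝ) := by
      intro y hy
      rw [X.mem_Sph] at hy
      rw [Finset.sum_const, X.countB (by omega) hy, nsmul_eq_mul, mul_one]
    rw [Finset.sum_congr rfl hper, Finset.sum_const, nsmul_eq_mul]
    rfl
  have rhse : ∑ w, (((X.Sph x d).filter
        (fun y => X.G.Adj y w ∧ X.G.dist x w = d + 1)).card : ℝ)
      = (X.K x (d+1) : ℝ) * X.c (d+1) := by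
    have hper : ∀ w : V, (((X.Sph x d).filter
          (fun y => X.G.Adj y w ∧ X.G.dist x w = d + 1)).card : ℝ)
        = (if X.G.dist x w = d + 1 then (X.c (d+1) : ℝ) else 0) := by
      intro w
      by_cases hw : X.G.dist x w = d + 1
      · rw [if_pos hw]
        have hset : (X.Sph x d).filter (fun y => X.G.Adj y w ∧ X.G.dist x w = d + 1)
            = Finset.univ.filter (fun z => X.G.Adj w z ∧ X.G.dist x z = (d+1) - 1) := by
          apply Finset.ext
          intro z
          simp only [Finset.mem_filter, Finset.mem_univ, true_and, X.mem_Sph]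
          constructor
          · rintro ⟨h1, h2, h3⟩
            exact ⟨h2.symm, by omega⟩
          · rintro ⟨h1, h2⟩
            exact ⟨by omega, h1.symm, hw⟩
        rw [hset, X.countC (by omega) (by omega) hw]
      · rw [if_neg hw]
        have hset : (X.Sph x d).filter (fun y => X.G.Adj y w ∧ X.G.dist x w = d + 1) = ∅ := by
          apply Finset.eq_empty_of_forall_notMem
          intro z hz
          rw [Finset.mem_filter] at hz
          exact hw hz.2.2
        rw [hset]
        simp
    rw [Finset.sum_congr rfl (fun w _ => hper w), ← Finset.sum_filter]
    have hseq : Finset.univ.filter (fun w => X.G.dist x w = d + 1) = X.Sph x (d+1) := rfl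
    rw [hseq, Finset.sum_const, nsmul_eq_mul]
    rfl
  rw [lhse, rhse] at swapped
  exact swapped

lemma K_indep {e : ℕ} (he : e ≤ X.D) (x x' : V) : X.K x e = X.K x' e := by
  induction e with
  | zero => rw [K, K, X.Sph_zero, X.Sph_zero]; simp
  | succ n ih =>
    have hlt : n < X.D := by omega
    have h1 := X.sphere_rec x hlt
    have h2 := X.sphere_rec x' hlt
    have hc : (1:ℝ) ≤ (X.c (n+1) : ℝ) := by
      have := X.cpos (i := n+1) (by omega) (by omega)
      exact_mod_cast this
    have ihn := ih (by omega)
    have : (X.K x (n+1) : ℝ) = (X.K x' (n+1) : ℝ) := by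
      have hcast : (X.K x n : ℝ) = (X.K x' n : ℝ) := by exact_mod_cast ihn
      rw [hcast] at h1
      rw [h2] at h1
      have hcne : (X.c (n+1) : ℝ) ≠ 0 := by linarith
      exact (mul_right_cancel₀ hcne h1).symm
    exact_mod_cast this

lemma K_pos {e : ℕ} (he : e ≤ X.D) (x : V) : 0 < X.K x e := by
  obtain ⟨x₀, hx₀⟩ := X.reach
  obtain ⟨y, hy⟩ := hx₀ e he
  rw [X.K_indep he x x₀, K]
  exact Finset.card_pos.2 ⟨y, X.mem_Sph.2 hy⟩

lemma kpos : 1 ≤ X.k := by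
  obtain ⟨x⟩ := X.nonemptyV
  have h := X.K_pos (e := 1) X.hD x
  rw [K, X.Sph_one, X.nbr_card] at h
  omega


end Ctx

/-- the weight sequence attached to an eigenvalue -/
noncomputable def useq (θ kr : ℝ) (b c : ℕ → ℕ) : ℕ → ℝ
  | 0 => 1
  | 1 => θ / kr
  | (d+2) => ((θ - (kr - (b (d+1) : ℝ) - (c (d+1) : ℝ))) * useq θ kr b c (d+1)
      - (c (d+1) : ℝ) * useq θ kr b c d) / (b (d+1) : ℝ)

namespace Ctx

variable [Fintype V] (X : Ctx V)

/-- the weight sequence for the minimal eigenvalue -/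
noncomputable def u : ℕ → ℝ := useq X.θ (X.k : ℝ) X.b X.c

lemma u0 : X.u 0 = 1 := rfl
lemma u1 : X.u 1 = X.θ / (X.k : ℝ) := rfl
lemma u_succ (d : ℕ) : X.u (d+2) = ((X.θ - ((X.k : ℝ) - (X.b (d+1) : ℝ) - (X.c (d+1) : ℝ)))
    * X.u (d+1) - (X.c (d+1) : ℝ) * X.u d) / (X.b (d+1) : ℝ) := rfl

lemma kne : ((X.k : ℝ)) ≠ 0 := by
  have := X.kpos
  positivity

lemma S1 {d : ℕ} (hd : d < X.D) :
    (X.c d : ℝ) * X.u (d-1) + ((X.k : ℝ) - X.b d - X.c d) * X.u d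
      + (X.b d : ℝ) * X.u (d+1) = X.θ * X.u d := by
  match d with
  | 0 =>
    rw [X.c0, X.b0, X.u0, X.u1]
    have := X.kne
    push_cast
    field_simp
    ring
  | (n+1) =>
    have hb : (1:ℝ) ≤ (X.b (n+1) : ℝ) := by
      have := X.bpos (i := n+1) hd
      exact_mod_cast this
    have hbne : (X.b (n+1) : ℝ) ≠ 0 := by linarith
    rw [X.u_succ n]
    have hidx : n + 1 - 1 = n := by omega
    rw [hidx]
    field_simp
    ring

lemma eig_finset {t : ℝ} {f : V → ℝ} (hf : ∀ x, ∑ᶠ y ∈ X.G.neighborSet x, f y = t * f x)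
    (x : V) : ∑ w ∈ X.G.neighborFinset x, f w = t * f x := by
  rw [← hf x, ← finsum_mem_coe_finset]
  congr 1
  ext y; simp

lemma finset_eig {t : ℝ} {f : V → ℝ} (hf : ∀ x, ∑ w ∈ X.G.neighborFinset x, f w = t * f x)
    (x : V) : ∑ᶠ y ∈ X.G.neighborSet x, f y = t * f x := by
  rw [← hf x, ← finsum_mem_coe_finset]
  congr 1
  ext y; simp

lemma nbrF_filter (y : V) :
    X.G.neighborFinset y = Finset.univ.filter (fun w => X.G.Adj y w) := by
  apply Finset.ext
  intro z
  simp

lemma star_eq :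
    (X.c X.D : ℝ) * X.u (X.D - 1) + ((X.k : ℝ) - X.b X.D - X.c X.D) * X.u X.D
      = X.θ * X.u X.D := by
  obtain ⟨f, hf0, heigf⟩ := X.emin
  have heig : ∀ x, ∑ w ∈ X.G.neighborFinset x, f w = X.θ * f x := X.eig_finset heigf
  obtain ⟨z, hz⟩ := Function.ne_iff.mp hf0
  simp only [Pi.zero_apply] at hz
  set g : ℕ → ℝ := fun e => ∑ y ∈ X.Sph z e, f y with hg
  have gRec : ∀ d, 1 ≤ d → d ≤ X.D →
      X.θ * g d = (X.b (d-1) : ℝ) * g (d-1) + ((X.k : ℝ) - X.b d - X.c d) * g d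
        + (X.c (d+1) : ℝ) * g (d+1) := by
    intro d hd1 hdD
    have h1 : X.θ * g d = ∑ y ∈ X.Sph z d, ∑ w ∈ Finset.univ.filter (fun w => X.G.Adj y w), f w := by
      rw [hg]
      rw [Finset.mul_sum]
      apply Finset.sum_congr rfl
      intro y _
      rw [← X.nbrF_filter, heig y]
    have h2 := swap_sum (X.Sph z d) (fun y w => X.G.Adj y w) f
    have h3 : ∀ w : V, f w * (((X.Sph z d).filter (fun y => X.G.Adj y w)).card : ℝ)
        = (((X.G.neighborFinset w).filter (fun y => X.G.dist z y = d)).card : ℝ) * f w := by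
      intro w
      rw [mul_comm]
      congr 2
      apply congrArg Finset.card
      apply Finset.ext
      intro y
      simp only [Finset.mem_filter, X.mem_Sph, SimpleGraph.mem_neighborFinset]
      constructor
      · rintro ⟨hd, ha⟩; exact ⟨ha.symm, hd⟩
      · rintro ⟨ha, hd⟩; exact ⟨hd, ha.symm⟩
    rw [h1, h2, Finset.sum_congr rfl (fun w _ => h3 w), X.sum_gamma z d hd1 hdD f]
  have hKpos : ∀ e, e ≤ X.D → (0:ℝ) < (X.K z e : ℝ) := by
    intro e he
    exact_mod_cast X.K_pos he z
  have gK : ∀ d, d ≤ X.D → g d = f z * (X.K z d : ℝ) * X.u d := by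
    intro d
    induction d using Nat.strong_induction_on with
    | _ d ih =>
      match d with
      | 0 =>
        intro _
        rw [hg]
        simp only [X.Sph_zero, Finset.sum_singleton, X.u0]
        rw [K, X.Sph_zero]
        simp
      | 1 =>
        intro _
        rw [hg]
        simp only [X.Sph_one]
        rw [heig z, K, X.Sph_one, X.nbr_card, X.u1]
        field_simp [X.kne]
      | (n+2) =>
        intro hdD
        have IH1 : g n = f z * (X.K z n : ℝ) * X.u n := ih n (by omega) (by omega)
        have IH2 : g (n+1) = f z * (X.K z (n+1) : ℝ) * X.u (n+1) := ih (n+1) (by omega) (by omega)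
        have target := gRec (n+1) (by omega) (by omega)
        have hidx : n + 1 - 1 = n := by omega
        have hidx2 : n + 1 + 1 = n + 2 := rfl
        rw [hidx, hidx2] at target
        have s1 := X.sphere_rec z (d := n) (by omega)
        have s2 := X.sphere_rec z (d := n+1) (by omega)
        rw [hidx2] at s2
        have hbne : (X.b (n+1) : ℝ) ≠ 0 := by
          have := X.bpos (i := n+1) (by omega)
          positivity
        have hu : (X.b (n+1) : ℝ) * X.u (n+2)
            = (X.θ - ((X.k : ℝ) - X.b (n+1) - X.c (n+1))) * X.u (n+1)
              - (X.c (n+1) : ℝ) * X.u n := by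
          rw [X.u_succ n]
          field_simp
        have hC2 : (X.c (n+2) : ℝ) ≠ 0 := by
          have := X.cpos (i := n+2) (by omega) (by omega)
          positivity
        apply mul_left_cancel₀ hC2
        linear_combination (-1 : ℝ) * target + (X.θ - ((X.k : ℝ) - X.b (n+1) - X.c (n+1))) * IH2
          - (X.b n : ℝ) * IH1 - (f z * (X.K z (n+1) : ℝ)) * hu
          - (f z * X.u n) * s1 + (f z * X.u (n+2)) * s2
  -- now the top relation
  have htop := gRec X.D X.hD le_rfl
  have hgD1 : g (X.D + 1) = 0 := by
    rw [hg]
    simp only [X.Sph_eq_empty (e := X.D + 1) (by omega), Finset.sum_empty]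
  rw [hgD1] at htop
  have hD1 := X.hD
  have hDex : X.D - 1 + 1 = X.D := by omega
  have s1 := X.sphere_rec z (d := X.D - 1) (by omega)
  rw [hDex] at s1
  have e1 := gK X.D le_rfl
  have e2 := gK (X.D - 1) (by omega)
  rw [e1, e2] at htop
  have hKD : (X.K z X.D : ℝ) ≠ 0 := by
    have := X.K_pos (e := X.D) le_rfl z
    positivity
  have key : (f z * (X.K z X.D : ℝ)) ≠ 0 := mul_ne_zero hz hKD
  apply mul_left_cancel₀ key
  linear_combination (-1 : ℝ) * htop - (f z * X.u (X.D - 1)) * s1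

lemma S1' {d : ℕ} (hd : d ≤ X.D) :
    (X.c d : ℝ) * X.u (d-1) + ((X.k : ℝ) - X.b d - X.c d) * X.u d
      + (X.b d : ℝ) * X.u (d+1) = X.θ * X.u d := by
  rcases lt_or_eq_of_le hd with h | h
  · exact X.S1 h
  · subst h
    have hst := X.star_eq
    have hbd0 : (X.b X.D : ℝ) = 0 := by rw [X.bD]; norm_num
    rw [hbd0] at hst ⊢
    linarith

/-- the radial function built from `u` is an eigenfunction -/
lemma RE (x y : V) :
    ∑ w ∈ X.G.neighborFinset y, X.u (X.G.dist x w) = X.θ * X.u (X.G.dist x y) := by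
  rw [X.part X.u rfl (X.distle x y)]
  exact X.S1' (X.distle x y)

lemma noconsec {m : ℕ} (hm : m + 1 ≤ X.D) (h0 : X.u m = 0) (h1 : X.u (m+1) = 0) : False := by
  have prop : ∀ m, m + 1 ≤ X.D → X.u m = 0 → X.u (m+1) = 0 → X.u 0 = 0 := by
    intro n
    induction n with
    | zero => intro _ ha _; exact ha
    | succ n ih =>
      intro hle ha hb
      have hs := X.S1 (d := n+1) (by omega)
      have hidx : n + 1 - 1 = n := by omega
      rw [hidx, ha, hb] at hs
      have hc : (1:ℝ) ≤ (X.c (n+1) : ℝ) := by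
        have := X.cpos (i := n+1) (by omega) (by omega)
        exact_mod_cast this
      have hun : X.u n = 0 := by
        have : (X.c (n+1) : ℝ) * X.u n = 0 := by linarith
        rcases mul_eq_zero.mp this with h | h
        · linarith
        · exact h
      exact ih (by omega) hun ha
  have := prop m hm h0 h1
  rw [X.u0] at this
  norm_num at this

/-- scalar action of sphere sums on eigenfunctions -/
lemma SA : ∀ i, i ≤ X.D → ∃ μ : ℝ, ∀ h : V → ℝ,
    (∀ x, ∑ w ∈ X.G.neighborFinset x, h w = X.θ * h x) →
    ∀ x, (∑ y ∈ X.Sph x i, h y) = μ * h x := by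
  intro i
  induction i using Nat.strong_induction_on with
  | _ i ih =>
    match i with
    | 0 =>
      intro _
      refine ⟨1, fun h _ x => ?_⟩
      rw [X.Sph_zero, Finset.sum_singleton, one_mul]
    | 1 =>
      intro _
      refine ⟨X.θ, fun h hh x => ?_⟩
      rw [X.Sph_one]
      exact hh x
    | (n+2) =>
      intro hle
      obtain ⟨μ1, hμ1⟩ := ih n (by omega) (by omega)
      obtain ⟨μ2, hμ2⟩ := ih (n+1) (by omega) (by omega)
      have hcpos := X.cpos (i := n+2) (by omega) (by omega)
      have hcne : (X.c (n+2) : ℝ) ≠ 0 := by positivity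
      refine ⟨(X.θ * μ2 - ((X.k : ℝ) - X.b (n+1) - X.c (n+1)) * μ2 - (X.b n : ℝ) * μ1)
        / (X.c (n+2) : ℝ), fun h hh x => ?_⟩
      have hs := swap_sum (X.G.neighborFinset x) (fun w y => X.G.dist w y = n + 1) h
      have hl : ∑ w ∈ X.G.neighborFinset x,
          ∑ y ∈ Finset.univ.filter (fun y => X.G.dist w y = n+1), h y
          = μ2 * (X.θ * h x) := by
        have hper : ∀ w ∈ X.G.neighborFinset x,
            ∑ y ∈ Finset.univ.filter (fun y => X.G.dist w y = n+1), h y = μ2 * h w := by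
          intro w _
          have hset : Finset.univ.filter (fun y => X.G.dist w y = n+1) = X.Sph w (n+1) := by
            apply Finset.ext
            intro z
            rw [X.mem_Sph]
            simp
          rw [hset]
          exact hμ2 h hh w
        rw [Finset.sum_congr rfl hper, ← Finset.mul_sum, hh x]
      rw [hl] at hs
      have hr : ∑ y, h y * (((X.G.neighborFinset x).filter
            (fun w => X.G.dist w y = n+1)).card : ℝ)
          = (X.b n : ℝ) * (∑ y ∈ X.Sph x n, h y)
            + ((X.k : ℝ) - X.b (n+1) - X.c (n+1)) * (∑ y ∈ X.Sph x (n+1), h y)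
            + (X.c (n+2) : ℝ) * (∑ y ∈ X.Sph x (n+2), h y) := by
        have hper : ∀ y : V, h y * (((X.G.neighborFinset x).filter
              (fun w => X.G.dist w y = n+1)).card : ℝ)
            = ((if X.G.dist x y + 1 = n+1 then (X.b (X.G.dist x y) : ℝ) else 0)
              + (if X.G.dist x y = n+1 then (X.k : ℝ) - X.b (n+1) - X.c (n+1) else 0)
              + (if X.G.dist x y = n+2 then (X.c (X.G.dist x y) : ℝ) else 0)) * h y := by
          intro y
          have hsame : ((X.G.neighborFinset x).filter (fun w => X.G.dist w y = n+1))
              = ((X.G.neighborFinset x).filter (fun w => X.G.dist y w = n+1)) := by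
            apply Finset.ext
            intro w
            simp only [Finset.mem_filter]
            rw [SimpleGraph.dist_comm]
          rw [hsame, X.count_gamma y x (n+1), SimpleGraph.dist_comm (u := y) (v := x), mul_comm]
        rw [Finset.sum_congr rfl (fun y _ => hper y)]
        have hgs := X.gamma_sum x (n+1) (by omega) (by omega) h
        have hi1 : n + 1 - 1 = n := by omega
        have hi2 : n + 1 + 1 = n + 2 := rfl
        rw [hi1, hi2] at hgs
        exact hgs
      rw [hr] at hs
      have hx1 := hμ1 h hh x
      have hx2 := hμ2 h hh x
      rw [div_mul_eq_mul_div, eq_div_iff hcne]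
      linear_combination (-1 : ℝ) * hs - (X.b n : ℝ) * hx1
        - ((X.k : ℝ) - X.b (n+1) - X.c (n+1)) * hx2

/-- the operator with radial kernel `u` acts as a scalar on eigenfunctions -/
lemma Xi : ∃ μ : ℝ, ∀ h : V → ℝ,
    (∀ x, ∑ w ∈ X.G.neighborFinset x, h w = X.θ * h x) →
    ∀ x, ∑ y, X.u (X.G.dist x y) * h y = μ * h x := by
  have hchoice : ∀ e : ℕ, ∃ μ : ℝ, e ≤ X.D → ∀ h : V → ℝ,
      (∀ x, ∑ w ∈ X.G.neighborFinset x, h w = X.θ * h x) →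
      ∀ x, (∑ y ∈ X.Sph x e, h y) = μ * h x := by
    intro e
    by_cases he : e ≤ X.D
    · obtain ⟨μ, hμ⟩ := X.SA e he
      exact ⟨μ, fun _ => hμ⟩
    · exact ⟨0, fun h => absurd h he⟩
  choose μf hμf using hchoice
  refine ⟨∑ e ∈ Finset.range (X.D + 1), X.u e * μf e, fun h hh x => ?_⟩
  rw [X.rws x X.u h]
  rw [Finset.sum_mul]
  apply Finset.sum_congr rfl
  intro e he
  rw [Finset.mem_range] at he
  rw [hμf e (by omega) h hh x]
  ring

lemma θneg : X.θ < 0 := by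
  obtain ⟨x₀, hx₀⟩ := X.reach
  obtain ⟨y₀, hy₀⟩ := hx₀ 1 X.hD
  have hadj : X.G.Adj x₀ y₀ := SimpleGraph.dist_eq_one_iff_adj.mp hy₀
  set A := X.G.adjMatrix ℝ with hAdef
  have hsymm : A.IsHermitian := by
    unfold Matrix.IsHermitian
    apply Matrix.ext
    intro i j
    rw [Matrix.conjTranspose_apply]
    simp [hAdef, SimpleGraph.adjMatrix_apply, SimpleGraph.adj_comm]
  have hmin_le : ∀ i : V, X.θ ≤ hsymm.eigenvalues i := by
    intro i
    apply X.lmin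
    refine ⟨(hsymm.eigenvectorBasis i : EuclideanSpace ℝ V), ?_, ?_⟩
    · intro h0
      have h1 := hsymm.eigenvectorBasis.orthonormal.1 i
      rw [EuclideanSpace.norm_eq] at h1
      have hzz : ∀ v : V, (hsymm.eigenvectorBasis i : EuclideanSpace ℝ V) v = 0 :=
        fun v => congrFun h0 v
      simp [hzz] at h1
    · apply X.finset_eig
      intro v
      have hmv := congrFun (hsymm.mulVec_eigenvectorBasis i) v
      rw [SimpleGraph.adjMatrix_mulVec_apply] at hmv
      simpa using hmv
  by_contra hge
  push_neg at hge
  have hnn : ∀ i, 0 ≤ hsymm.eigenvalues i := fun i => le_trans hge (hmin_le i)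
  have hpsd : A.PosSemidef := hsymm.posSemidef_iff_eigenvalues_nonneg.mpr (fun i => hnn i)
  set w : V → ℝ := fun v => (if v = x₀ then (1:ℝ) else 0) - (if v = y₀ then (1:ℝ) else 0)
    with hw
  have hquad := hpsd.dotProduct_mulVec_nonneg w
  have hstar : star w = w := by
    funext v
    simp [hw]
  rw [hstar] at hquad
  have hne : x₀ ≠ y₀ := X.G.ne_of_adj hadj
  have hmv : ∀ v, (A.mulVec w) v = ∑ u ∈ X.G.neighborFinset v, w u := by
    intro v
    rw [hAdef, SimpleGraph.adjMatrix_mulVec_apply]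
  have hval : ∀ v : V, ∑ u ∈ X.G.neighborFinset v, w u
      = (if X.G.Adj v x₀ then (1:ℝ) else 0) - (if X.G.Adj v y₀ then (1:ℝ) else 0) := by
    intro v
    simp only [hw]
    rw [Finset.sum_sub_distrib]
    rw [Finset.sum_ite_eq' (X.G.neighborFinset v) x₀ (fun _ => (1:ℝ))]
    rw [Finset.sum_ite_eq' (X.G.neighborFinset v) y₀ (fun _ => (1:ℝ))]
    simp [SimpleGraph.mem_neighborFinset]
  have hcomp : dotProduct w (A.mulVec w) = -2 := by
    unfold dotProduct
    have hsummand : ∀ v : V, w v * (A.mulVec w) v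
        = (if v = x₀ then (A.mulVec w) v else 0) - (if v = y₀ then (A.mulVec w) v else 0) := by
      intro v
      by_cases h1 : v = x₀
      · have h2 : ¬ v = y₀ := by rw [h1]; exact hne
        simp only [hw, if_pos h1, if_neg h2]
        ring
      · by_cases h2 : v = y₀
        · simp only [hw, if_pos h2, if_neg h1]
          ring
        · simp only [hw, if_neg h1, if_neg h2]
          ring
    rw [Finset.sum_congr rfl (fun v _ => hsummand v), Finset.sum_sub_distrib]
    rw [Finset.sum_ite_eq' Finset.univ x₀ (fun v => (A.mulVec w) v)]
    rw [Finset.sum_ite_eq' Finset.univ y₀ (fun v => (A.mulVec w) v)]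
    rw [if_pos (Finset.mem_univ _), if_pos (Finset.mem_univ _)]
    rw [hmv x₀, hmv y₀, hval x₀, hval y₀]
    have hirr1 : ¬ X.G.Adj x₀ x₀ := X.G.irrefl
    have hirr2 : ¬ X.G.Adj y₀ y₀ := X.G.irrefl
    rw [if_neg hirr1, if_pos hadj, if_pos hadj.symm, if_neg hirr2]
    ring
  rw [hcomp] at hquad
  linarith

lemma θne : X.θ ≠ 0 := ne_of_lt X.θneg

/-- Fact B : the `u`-radial sums over a Delsarte clique vanish. -/
lemma factB {C : Set V} (hclq : X.G.IsClique C)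
    (hcard : ((Finset.univ.filter (fun y => y ∈ C)).card : ℝ) = 1 - (X.k : ℝ) / X.θ)
    (x : V) :
    ∑ y ∈ Finset.univ.filter (fun y => y ∈ C), X.u (X.G.dist x y) = 0 := by
  set CF := Finset.univ.filter (fun y => y ∈ C) with hCF
  set φ : V → ℝ := fun v => ∑ y ∈ CF, X.u (X.G.dist v y) with hφ
  have heigφ : ∀ v, ∑ w ∈ X.G.neighborFinset v, φ w = X.θ * φ v := by
    intro v
    simp only [hφ]
    rw [Finset.sum_comm]
    have hper : ∀ y ∈ CF, ∑ w ∈ X.G.neighborFinset v, X.u (X.G.dist w y)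
        = X.θ * X.u (X.G.dist v y) := by
      intro y _
      have hc : ∀ w ∈ X.G.neighborFinset v, X.u (X.G.dist w y) = X.u (X.G.dist y w) := by
        intro w _
        rw [SimpleGraph.dist_comm]
      rw [Finset.sum_congr rfl hc, X.RE y v, SimpleGraph.dist_comm]
    rw [Finset.sum_congr rfl hper, ← Finset.mul_sum]
  obtain ⟨μ, hμ⟩ := X.Xi
  have inner0 : ∑ v ∈ CF, φ v = 0 := by
    have hper : ∀ v ∈ CF, φ v = 1 + ((CF.card : ℝ) - 1) * (X.θ / X.k) := by
      intro v hv
      have hvC : v ∈ C := by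
        rw [hCF, Finset.mem_filter] at hv
        exact hv.2
      simp only [hφ]
      rw [← Finset.add_sum_erase CF _ hv]
      have h1 : X.u (X.G.dist v v) = 1 := by rw [SimpleGraph.dist_self, X.u0]
      have h2 : ∀ y ∈ CF.erase v, X.u (X.G.dist v y) = X.θ / X.k := by
        intro y hy
        obtain ⟨hne, hyCF⟩ := Finset.mem_erase.mp hy
        have hyC : y ∈ C := by
          rw [hCF, Finset.mem_filter] at hyCF
          exact hyCF.2
        have hadj : X.G.Adj v y := hclq hvC hyC (Ne.symm hne)
        rw [SimpleGraph.dist_eq_one_iff_adj.mpr hadj, X.u1]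
      rw [h1, Finset.sum_congr rfl h2, Finset.sum_const, Finset.card_erase_of_mem hv,
        nsmul_eq_mul]
      have hcpos : 1 ≤ CF.card := Finset.card_pos.2 ⟨v, hv⟩
      have : ((CF.card - 1 : ℕ) : ℝ) = (CF.card : ℝ) - 1 := by
        push_cast [hcpos]
        ring
      rw [this]
    rw [Finset.sum_congr rfl hper, Finset.sum_const, nsmul_eq_mul]
    rw [hcard]
    have hkne := X.kne
    have hθne := X.θne
    field_simp
    ring
  have sumsq : ∑ v, φ v * φ v = 0 := by
    have step1 : ∑ v, φ v * φ v = ∑ v, ∑ y ∈ CF, X.u (X.G.dist v y) * φ v := by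
      apply Finset.sum_congr rfl
      intro v _
      rw [← Finset.sum_mul]
    rw [step1, Finset.sum_comm]
    have step2 : ∀ y ∈ CF, ∑ v, X.u (X.G.dist v y) * φ v = μ * φ y := by
      intro y _
      have hc : ∀ v : V, X.u (X.G.dist v y) * φ v = X.u (X.G.dist y v) * φ v := by
        intro v
        rw [SimpleGraph.dist_comm]
      rw [Finset.sum_congr rfl (fun v _ => hc v)]
      exact hμ φ heigφ y
    rw [Finset.sum_congr rfl step2, ← Finset.mul_sum, inner0, mul_zero]
  have hzero : ∀ v : V, φ v * φ v = 0 := by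
    intro v
    have := (Finset.sum_eq_zero_iff_of_nonneg
      (fun v _ => mul_self_nonneg (φ v))).mp sumsq v (Finset.mem_univ v)
    exact this
  have := mul_self_eq_zero.mp (hzero x)
  simpa only [hφ] using this

lemma s1_gt : (1:ℝ) < 1 - (X.k : ℝ) / X.θ := by
  have hθ := X.θneg
  have hk := X.kpos
  have hkR : (0:ℝ) < (X.k : ℝ) := by exact_mod_cast hk
  have : (X.k : ℝ) / X.θ < 0 := div_neg_of_pos_of_neg hkR hθ
  linarith

lemma config {C : Set V} (hclq : X.G.IsClique C)
    (hcard : ((Finset.univ.filter (fun y => y ∈ C)).card : ℝ) = 1 - (X.k : ℝ) / X.θ)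
    {x : V} {i : ℕ} (hi : sInf ((X.G.dist x) '' C) = i) :
    1 ≤ ((Finset.univ.filter (fun y => y ∈ C)).filter (fun y => X.G.dist x y = i)).card ∧
    ((((Finset.univ.filter (fun y => y ∈ C)).filter (fun y => X.G.dist x y = i)).card : ℝ)
      + (((Finset.univ.filter (fun y => y ∈ C)).filter
          (fun y => X.G.dist x y = i+1)).card : ℝ)
      = 1 - (X.k : ℝ) / X.θ) ∧
    ((((Finset.univ.filter (fun y => y ∈ C)).filter
        (fun y => X.G.dist x y = i)).card : ℝ) * X.u i
      + (((Finset.univ.filter (fun y => y ∈ C)).filter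
        (fun y => X.G.dist x y = i+1)).card : ℝ) * X.u (i+1) = 0) := by
  set CF := Finset.univ.filter (fun y => y ∈ C) with hCF
  have hCF1 : 1 < CF.card := by
    have h1 := X.s1_gt
    rw [← hcard] at h1
    exact_mod_cast h1
  have hCne : ∃ y, y ∈ C := by
    have hpos : 0 < CF.card := by omega
    obtain ⟨y, hy⟩ := Finset.card_pos.mp hpos
    rw [hCF, Finset.mem_filter] at hy
    exact ⟨y, hy.2⟩
  obtain ⟨yc, hyc⟩ := hCne
  have himg : ((X.G.dist x) '' C).Nonempty := ⟨_, Set.mem_image_of_mem _ hyc⟩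
  have hmem := Nat.sInf_mem himg
  rw [hi] at hmem
  obtain ⟨y₀, hy₀C, hy₀d⟩ := hmem
  have hlb : ∀ y ∈ C, i ≤ X.G.dist x y := by
    intro y hy
    rw [← hi]
    exact Nat.sInf_le (Set.mem_image_of_mem _ hy)
  have hub : ∀ y ∈ C, X.G.dist x y ≤ i + 1 := by
    intro y hy
    have tri := X.conn.dist_triangle (u := x) (v := y₀) (w := y)
    by_cases hyy : y = y₀
    · subst hyy
      omega
    · have hadj : X.G.Adj y₀ y := hclq hy₀C hy (fun h => hyy h.symm)
      have hd1 : X.G.dist y₀ y = 1 := SimpleGraph.dist_eq_one_iff_adj.mpr hadj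
      omega
  have hmemCF : ∀ y, y ∈ CF ↔ y ∈ C := by
    intro y
    rw [hCF, Finset.mem_filter]
    simp
  have hfeq : CF.filter (fun y => ¬ X.G.dist x y = i)
      = CF.filter (fun y => X.G.dist x y = i+1) := by
    apply Finset.ext
    intro y
    simp only [Finset.mem_filter]
    constructor
    · rintro ⟨h1, h2⟩
      have hyC : y ∈ C := (hmemCF y).mp h1
      have := hlb y hyC
      have := hub y hyC
      exact ⟨h1, by omega⟩
    · rintro ⟨h1, h2⟩
      exact ⟨h1, by omega⟩
  have hsplitN : (CF.filter (fun y => X.G.dist x y = i)).card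
      + (CF.filter (fun y => X.G.dist x y = i+1)).card = CF.card := by
    have := Finset.card_filter_add_card_filter_not
      (s := CF) (p := fun y => X.G.dist x y = i)
    rw [hfeq] at this
    exact this
  have hα1 : 1 ≤ (CF.filter (fun y => X.G.dist x y = i)).card := by
    apply Finset.card_pos.mpr
    refine ⟨y₀, Finset.mem_filter.mpr ⟨(hmemCF y₀).mpr hy₀C, hy₀d⟩⟩
  refine ⟨hα1, ?_, ?_⟩
  · rw [← hcard]
    exact_mod_cast hsplitN
  · have hfact := X.factB hclq hcard x
    rw [← hCF] at hfact
    rw [← Finset.sum_filter_add_sum_filter_not CF (fun y => X.G.dist x y = i)] at hfact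
    rw [hfeq] at hfact
    have e1 : ∑ y ∈ CF.filter (fun y => X.G.dist x y = i), X.u (X.G.dist x y)
        = ((CF.filter (fun y => X.G.dist x y = i)).card : ℝ) * X.u i := by
      rw [Finset.sum_congr rfl (fun y hy => by rw [(Finset.mem_filter.mp hy).2]),
        Finset.sum_const, nsmul_eq_mul]
    have e2 : ∑ y ∈ CF.filter (fun y => X.G.dist x y = i+1), X.u (X.G.dist x y)
        = ((CF.filter (fun y => X.G.dist x y = i+1)).card : ℝ) * X.u (i+1) := by
      rw [Finset.sum_congr rfl (fun y hy => by rw [(Finset.mem_filter.mp hy).2]),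
        Finset.sum_const, nsmul_eq_mul]
    rw [e1, e2] at hfact
    exact hfact

lemma beta_pos {C : Set V} (hclq : X.G.IsClique C)
    (hcard : ((Finset.univ.filter (fun y => y ∈ C)).card : ℝ) = 1 - (X.k : ℝ) / X.θ)
    {x : V} {i : ℕ} (hi : sInf ((X.G.dist x) '' C) = i) (hiD : i + 1 ≤ X.D) :
    1 ≤ ((Finset.univ.filter (fun y => y ∈ C)).filter
      (fun y => X.G.dist x y = i+1)).card := by
  by_contra hβ
  push_neg at hβ
  have hβ0 : ((Finset.univ.filter (fun y => y ∈ C)).filter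
      (fun y => X.G.dist x y = i+1)).card = 0 := by omega
  obtain ⟨hα1, hsum, heq⟩ := X.config hclq hcard hi
  have hui : X.u i = 0 := by
    rw [hβ0] at heq
    have hαR : (1:ℝ) ≤ (((Finset.univ.filter (fun y => y ∈ C)).filter
        (fun y => X.G.dist x y = i)).card : ℝ) := by exact_mod_cast hα1
    have : (((Finset.univ.filter (fun y => y ∈ C)).filter
        (fun y => X.G.dist x y = i)).card : ℝ) * X.u i = 0 := by
      push_cast at heq ⊢
      linarith
    rcases mul_eq_zero.mp this with h | h
    · linarith
    · exact h
  rcases Nat.eq_zero_or_pos i with hi0 | hipos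
  · subst hi0
    rw [X.u0] at hui
    norm_num at hui
  · -- move one step closer to the clique
    -- find y₀ ∈ C at distance i
    have hCF1 : 1 < (Finset.univ.filter (fun y => y ∈ C)).card := by
      have h1 := X.s1_gt
      rw [← hcard] at h1
      exact_mod_cast h1
    have hCne : ∃ y, y ∈ C := by
      have hpos : 0 < (Finset.univ.filter (fun y => y ∈ C)).card := by omega
      obtain ⟨y, hy⟩ := Finset.card_pos.mp hpos
      rw [Finset.mem_filter] at hy
      exact ⟨y, hy.2⟩
    obtain ⟨yc, hyc⟩ := hCne
    have himg : ((X.G.dist x) '' C).Nonempty := ⟨_, Set.mem_image_of_mem _ hyc⟩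
    have hmem := Nat.sInf_mem himg
    rw [hi] at hmem
    obtain ⟨y₀, hy₀C, hy₀d⟩ := hmem
    have hlb : ∀ y ∈ C, i ≤ X.G.dist x y := by
      intro y hy
      rw [← hi]
      exact Nat.sInf_le (Set.mem_image_of_mem _ hy)
    obtain ⟨p, hp⟩ := X.conn.exists_walk_length_eq_dist x y₀
    have hplen : p.length = i := by rw [hp, hy₀d]
    set x' := p.getVert 1 with hx'
    have hgv := X.geodesic_getVert p hp (i := 1) (by omega)
    have hd1 : X.G.dist x x' = 1 := hgv.1
    have hd2 : X.G.dist x' y₀ = i - 1 := by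
      rw [hgv.2, hplen]
    have hlb' : ∀ y ∈ C, i - 1 ≤ X.G.dist x' y := by
      intro y hy
      have tri := X.conn.dist_triangle (u := x) (v := x') (w := y)
      have := hlb y hy
      omega
    have hsInf' : sInf ((X.G.dist x') '' C) = i - 1 := by
      apply le_antisymm
      · rw [← hd2]
        exact Nat.sInf_le (Set.mem_image_of_mem _ hy₀C)
      · apply le_csInf ⟨_, Set.mem_image_of_mem _ hy₀C⟩
        rintro b ⟨y, hy, rfl⟩
        exact hlb' y hy
    obtain ⟨hα1', hsum', heq'⟩ := X.config hclq hcard hsInf'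
    have hidx : i - 1 + 1 = i := by omega
    rw [hidx] at heq'
    have hui1 : X.u (i-1) = 0 := by
      rw [hui] at heq'
      have hαR : (1:ℝ) ≤ (((Finset.univ.filter (fun y => y ∈ C)).filter
          (fun y => X.G.dist x' y = i-1)).card : ℝ) := by exact_mod_cast hα1'
      have : (((Finset.univ.filter (fun y => y ∈ C)).filter
          (fun y => X.G.dist x' y = i-1)).card : ℝ) * X.u (i-1) = 0 := by linarith
      rcases mul_eq_zero.mp this with h | h
      · linarith
      · exact h
    refine X.noconsec (m := i - 1) (by omega) hui1 ?_
    rw [hidx]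
    exact hui

lemma unique_ab {i : ℕ} (hi1 : i + 1 ≤ X.D) {α β α' β' : ℝ}
    (h1 : α * X.u i + β * X.u (i+1) = 0) (h2 : α' * X.u i + β' * X.u (i+1) = 0)
    (hs : α + β = 1 - (X.k : ℝ) / X.θ) (hs' : α' + β' = 1 - (X.k : ℝ) / X.θ) :
    α = α' ∧ β = β' := by
  by_cases hu : X.u i = X.u (i+1)
  · exfalso
    have hne : (1:ℝ) - (X.k : ℝ) / X.θ ≠ 0 := by
      have := X.s1_gt
      linarith
    have hui1 : X.u (i+1) = 0 := by
      have hz : (1 - (X.k : ℝ) / X.θ) * X.u (i+1) = 0 := by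
        rw [← hs]
        linear_combination h1 - α * hu
      rcases mul_eq_zero.mp hz with h | h
      · exact absurd h hne
      · exact h
    exact X.noconsec hi1 (hu ▸ hui1) hui1
  · have hd : X.u i - X.u (i+1) ≠ 0 := sub_ne_zero.mpr hu
    have hz : (α - α') * (X.u i - X.u (i+1)) = 0 := by
      linear_combination h1 - h2 - X.u (i+1) * hs + X.u (i+1) * hs'
    rcases mul_eq_zero.mp hz with h | h
    · have hαα : α = α' := by linarith [sub_eq_zero.mp h]
      exact ⟨hαα, by linarith⟩
    · exact absurd h hd

end Ctx
end CliqueBitradeAux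


namespace CliqueBitrade

variable {V : Type*}

/-- `f` is an eigenfunction of the graph `G` with eigenvalue `θ`:
`f` is not identically zero and for every vertex the sum of `f` over its
neighbors equals `θ` times its value. -/
def IsEigenfunction (G : SimpleGraph V) (θ : ℝ) (f : V → ℝ) : Prop :=
  f ≠ 0 ∧ ∀ x : V, ∑ᶠ y ∈ G.neighborSet x, f y = θ * f x

/-- `G` is regular of degree `k`. -/
def IsRegularOfDeg (G : SimpleGraph V) (k : ℕ) : Prop :=
  ∀ v : V, (G.neighborSet v).ncard = k

/-- `(G, S)` is a `(k,s,m)` pair: `G` is regular of degree `k`, `S` is a set of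
`(s+1)`-cliques of `G`, and every edge of `G` lies in exactly `m` cliques of `S`. -/
def IsKSMPair (G : SimpleGraph V) (S : Set (Set V)) (k s m : ℕ) : Prop :=
  IsRegularOfDeg G k ∧
  (∀ C ∈ S, G.IsClique C ∧ C.ncard = s + 1) ∧
  (∀ x y : V, G.Adj x y → {C ∈ S | x ∈ C ∧ y ∈ C}.ncard = m)

/-- `T` is an independent set of vertices of `G`. -/
def IsIndependent (G : SimpleGraph V) (T : Set V) : Prop :=
  ∀ x ∈ T, ∀ y ∈ T, ¬ G.Adj x y

/-- `(T₀, T₁)` is an `S`-bitrade: a pair of disjoint nonempty independent sets such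
that every clique of `S` either meets each of `T₀`, `T₁` in exactly one vertex,
or meets neither. -/
def IsBitrade (G : SimpleGraph V) (S : Set (Set V)) (T₀ T₁ : Set V) : Prop :=
  Disjoint T₀ T₁ ∧ T₀.Nonempty ∧ T₁.Nonempty ∧
  IsIndependent G T₀ ∧ IsIndependent G T₁ ∧
  ∀ C ∈ S, ((C ∩ T₀).ncard = 1 ∧ (C ∩ T₁).ncard = 1) ∨ (C ∩ T₀ = ∅ ∧ C ∩ T₁ = ∅)

/-- The function `f^T`: `1` on `T₀`, `-1` on `T₁`, `0` elsewhere. -/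
noncomputable def fT (T₀ T₁ : Set V) : V → ℝ :=
  fun x => if x ∈ T₀ then 1 else if x ∈ T₁ then -1 else 0

/-- `θ` is the minimum eigenvalue of (the adjacency matrix of) `G`. -/
def IsMinEigenvalue (G : SimpleGraph V) (θ : ℝ) : Prop :=
  (∃ f : V → ℝ, IsEigenfunction G θ f) ∧
  ∀ θ' : ℝ, (∃ f : V → ℝ, IsEigenfunction G θ' f) → θ ≤ θ'

/-- `G` is a connected distance-regular graph of diameter `D` with intersection
numbers `b i`, `c i`. -/
def IsDistRegular (G : SimpleGraph V) (D : ℕ) (b c : ℕ → ℕ) : Prop :=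
  G.Connected ∧ (∀ x y : V, G.dist x y ≤ D) ∧ (∃ x y : V, G.dist x y = D) ∧
  b D = 0 ∧ c 0 = 0 ∧
  ∀ i ≤ D, ∀ x y : V, G.dist x y = i →
    {z : V | G.Adj y z ∧ G.dist x z = i + 1}.ncard = b i ∧
    (1 ≤ i → {z : V | G.Adj y z ∧ G.dist x z = i - 1}.ncard = c i)

/-- A Delsarte clique of a graph of degree `k` with minimum eigenvalue `θmin`:
a clique with exactly `1 - k/θmin` vertices. -/
def IsDelsarteClique (G : SimpleGraph V) (k : ℕ) (θmin : ℝ) (C : Set V) : Prop :=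
  G.IsClique C ∧ (C.ncard : ℝ) = 1 - (k : ℝ) / θmin

/-- The distance from the vertex `x` to the set `C`. -/
noncomputable def distToSet (G : SimpleGraph V) (C : Set V) (x : V) : ℕ :=
  sInf ((G.dist x) '' C)

/-- `C` is a completely regular set of `G` with covering radius `ρ` and
intersection array given by `b`, `c`. -/
def IsCompletelyRegularWith (G : SimpleGraph V) (C : Set V) (ρ : ℕ) (b c : ℕ → ℕ) : Prop :=
  (∃ y : V, distToSet G C y = ρ) ∧ (∀ y : V, distToSet G C y ≤ ρ) ∧
  b ρ = 0 ∧ c 0 = 0 ∧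
  ∀ i ≤ ρ, ∀ y : V, distToSet G C y = i →
    {z : V | G.Adj y z ∧ distToSet G C z = i + 1}.ncard = b i ∧
    (1 ≤ i → {z : V | G.Adj y z ∧ distToSet G C z = i - 1}.ncard = c i)

/-- `C` is a completely regular set of `G` with covering radius `ρ`. -/
def IsCompletelyRegular (G : SimpleGraph V) (C : Set V) (ρ : ℕ) : Prop :=
  ∃ b c : ℕ → ℕ, IsCompletelyRegularWith G C ρ b c

/-- `(G, S)` is a Delsarte pair: a `(k,s,m)` pair where `G` is distance-regular
(with diameter `D`, intersection numbers `b`, `c`, minimum eigenvalue `θmin`)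
and all cliques of `S` are Delsarte cliques. -/
def IsDelsartePair (G : SimpleGraph V) (S : Set (Set V)) (k s m D : ℕ)
    (b c : ℕ → ℕ) (θmin : ℝ) : Prop :=
  IsKSMPair G S k s m ∧ IsDistRegular G D b c ∧ IsMinEigenvalue G θmin ∧
  ∀ C ∈ S, IsDelsarteClique G k θmin C

/-- The weight-distribution coefficients `W i = W^i_{A,θ}` determined by the
intersection array of a distance-regular graph of degree `k` and an eigenvalue `θ`. -/
def IsWDCoeffs (k : ℕ) (b c : ℕ → ℕ) (θ : ℝ) (D : ℕ) (W : ℕ → ℝ) : Prop :=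
  W 0 = 1 ∧ W 1 = θ ∧
  ∀ i : ℕ, 2 ≤ i → i ≤ D →
    W i = ((θ - ((k : ℝ) - b (i - 1) - c (i - 1))) * W (i - 1) - (b (i - 2) : ℝ) * W (i - 2)) / (c i : ℝ)

/-- In a distance-regular graph of degree `k` and diameter `D`
(with minimum eigenvalue `θmin`), there exist positive reals
`s⁺₀, …, s⁺_{D-1}` and `s⁻₁, …, s⁻_D` such that for every vertex `x` and every
Delsarte clique `C` at distance `i ≤ D-1` from `x`,
`|Γ_i(x) ∩ C| = s⁺ᵢ` and `|Γ_{i+1}(x) ∩ C| = s⁻_{i+1}`. -/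
theorem statement6 [Fintype V] (G : SimpleGraph V) (D k : ℕ) (b c : ℕ → ℕ)
    (hdrg : IsDistRegular G D b c) (hreg : IsRegularOfDeg G k)
    (θmin : ℝ) (hmin : IsMinEigenvalue G θmin) :
    ∃ sp sm : ℕ → ℝ,
      (∀ i ≤ D - 1, 0 < sp i) ∧ (∀ i : ℕ, 1 ≤ i → i ≤ D → 0 < sm i) ∧
      ∀ (x : V) (C : Set V), IsDelsarteClique G k θmin C →
        ∀ i ≤ D - 1, distToSet G C x = i →
          ({y ∈ C | G.dist x y = i}.ncard : ℝ) = sp i ∧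
          ({y ∈ C | G.dist x y = i + 1}.ncard : ℝ) = sm (i + 1) := by
  classical
  obtain ⟨hconn, hdle, hdD, hbD, hc0, hDR⟩ := hdrg
  by_cases hD0 : D = 0
  · -- degenerate case : the graph is a single vertex
    subst hD0
    have hsub : ∀ x y : V, x = y := by
      intro x y
      have h := hdle x y
      exact hconn.dist_eq_zero_iff.mp (by omega)
    refine ⟨fun _ => 1, fun _ => 0, fun i _ => one_pos, fun i h1 h2 => by omega, ?_⟩
    intro x C hC i hi hdist
    have hi0 : i = 0 := by omega
    subst hi0
    have hempty : ∀ z : V, G.neighborSet z = ∅ := by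
      intro z
      ext y
      simp only [SimpleGraph.mem_neighborSet, Set.mem_empty_iff_false, iff_false]
      intro hadj
      exact G.ne_of_adj hadj (hsub z y)
    have hk0 : k = 0 := by
      have h := hreg x
      rw [hempty x] at h
      simpa using h.symm
    have hθ0 : θmin = 0 := by
      obtain ⟨f, hf0, hfe⟩ := hmin.1
      obtain ⟨z, hz⟩ := Function.ne_iff.mp hf0
      simp only [Pi.zero_apply] at hz
      have hy := hfe z
      rw [hempty z, finsum_mem_empty] at hy
      rcases mul_eq_zero.mp hy.symm with h | h
      · exact h
      · exact absurd h hz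
    have hC1 : C.ncard = 1 := by
      have h2 := hC.2
      rw [hθ0, hk0] at h2
      simp only [Nat.cast_zero, zero_div, div_zero, sub_zero] at h2
      exact_mod_cast h2
    obtain ⟨v, hCv⟩ := Set.ncard_eq_one.mp hC1
    have hdv : ∀ y : V, G.dist x y = 0 := by
      intro y
      have := hdle x y
      omega
    constructor
    · have hset : {y ∈ C | G.dist x y = 0} = {v} := by
        ext y
        simp only [Set.mem_sep_iff, Set.mem_singleton_iff, hCv]
        constructor
        · rintro ⟨h1, _⟩; exact h1
        · rintro rfl; exact ⟨rfl, hdv _⟩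
      rw [hset, Set.ncard_singleton]
      norm_num
    · have hset : {y ∈ C | G.dist x y = 0 + 1} = ∅ := by
        ext y
        simp only [Set.mem_sep_iff, Set.mem_empty_iff_false, iff_false]
        rintro ⟨_, h2⟩
        rw [hdv y] at h2
        omega
      rw [hset, Set.ncard_empty]
      norm_num
  · -- main case
    have hD1 : 1 ≤ D := by omega
    set X : CliqueBitradeAux.Ctx V :=
      { G := G, D := D, k := k, b := b, c := c, θ := θmin,
        conn := hconn, distle := hdle, distD := hdD, bD := hbD, c0 := hc0,
        DR := hDR, reg := hreg, hD := hD1, emin := hmin.1, lmin := hmin.2 } with hX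
    have hXD : X.D = D := by rw [hX]
    have hbridge : ∀ C : Set V, IsDelsarteClique G k θmin C →
        ((Finset.univ.filter (fun y => y ∈ C)).card : ℝ) = 1 - (k : ℝ) / θmin := by
      intro C hC
      have he : C = ↑(Finset.univ.filter (fun y => y ∈ C)) := by
        ext z
        simp
      have h1 : C.ncard = (Finset.univ.filter (fun y => y ∈ C)).card := by
        conv_lhs => rw [he]
        rw [Set.ncard_coe_finset]
      rw [← h1]
      exact hC.2
    set Cond : ℕ → V × Set V → Prop :=
      fun i p => IsDelsarteClique G k θmin p.2 ∧ distToSet G p.2 p.1 = i with hCond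
    set sp : ℕ → ℝ := fun i => if h : ∃ p : V × Set V, Cond i p then
        (((Finset.univ.filter (fun y => y ∈ h.choose.2)).filter
          (fun y => G.dist h.choose.1 y = i)).card : ℝ) else 1 with hsp
    set sm : ℕ → ℝ := fun j => if h : ∃ p : V × Set V, Cond (j-1) p then
        (((Finset.univ.filter (fun y => y ∈ h.choose.2)).filter
          (fun y => G.dist h.choose.1 y = j)).card : ℝ) else 1 with hsm
    have hconfig : ∀ (x : V) (C : Set V), IsDelsarteClique G k θmin C →
        ∀ i : ℕ, distToSet G C x = i →
        1 ≤ ((Finset.univ.filter (fun y => y ∈ C)).filter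
            (fun y => G.dist x y = i)).card ∧
        ((((Finset.univ.filter (fun y => y ∈ C)).filter
            (fun y => G.dist x y = i)).card : ℝ)
          + (((Finset.univ.filter (fun y => y ∈ C)).filter
            (fun y => G.dist x y = i+1)).card : ℝ)
          = 1 - (k : ℝ) / θmin) ∧
        ((((Finset.univ.filter (fun y => y ∈ C)).filter
            (fun y => G.dist x y = i)).card : ℝ) * X.u i
          + (((Finset.univ.filter (fun y => y ∈ C)).filter
            (fun y => G.dist x y = i+1)).card : ℝ) * X.u (i+1) = 0) := by
      intro x C hC i hdist
      exact X.config hC.1 (hbridge C hC) hdist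
    refine ⟨sp, sm, ?_, ?_, ?_⟩
    · -- positivity of sp
      intro i _
      simp only [hsp]
      by_cases h : ∃ p : V × Set V, Cond i p
      · rw [dif_pos h]
        obtain ⟨hα1, -, -⟩ := hconfig h.choose.1 h.choose.2 h.choose_spec.1 i h.choose_spec.2
        have : (1:ℝ) ≤ (((Finset.univ.filter (fun y => y ∈ h.choose.2)).filter
            (fun y => G.dist h.choose.1 y = i)).card : ℝ) := by exact_mod_cast hα1
        linarith
      · rw [dif_neg h]
        norm_num
    · -- positivity of sm
      intro j hj1 hjD
      simp only [hsm]
      by_cases h : ∃ p : V × Set V, Cond (j-1) p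
      · rw [dif_pos h]
        have hb := X.beta_pos (C := h.choose.2) h.choose_spec.1.1
          (hbridge _ h.choose_spec.1) (x := h.choose.1) (i := j - 1)
          h.choose_spec.2 (by omega)
        have hj : j - 1 + 1 = j := by omega
        rw [hj] at hb
        have : (1:ℝ) ≤ (((Finset.univ.filter (fun y => y ∈ h.choose.2)).filter
            (fun y => G.dist h.choose.1 y = j)).card : ℝ) := by exact_mod_cast hb
        linarith
      · rw [dif_neg h]
        norm_num
    · -- the main equalities
      intro x C hC i hi hdist
      have hiD : i + 1 ≤ D := by omega
      have hex : ∃ p : V × Set V, Cond i p := ⟨(x, C), hC, hdist⟩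
      obtain ⟨hα1A, hsumA, heqA⟩ := hconfig x C hC i hdist
      obtain ⟨hα1B, hsumB, heqB⟩ :=
        hconfig hex.choose.1 hex.choose.2 hex.choose_spec.1 i hex.choose_spec.2
      have huniq := X.unique_ab (i := i) hiD heqA heqB hsumA hsumB
      have hnc1 : {y ∈ C | G.dist x y = i}.ncard
          = ((Finset.univ.filter (fun y => y ∈ C)).filter
            (fun y => G.dist x y = i)).card := by
        have he : {y ∈ C | G.dist x y = i}
            = ↑((Finset.univ.filter (fun y => y ∈ C)).filter
              (fun y => G.dist x y = i)) := by
          ext z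
          simp [Set.mem_sep_iff]
        rw [he, Set.ncard_coe_finset]
      have hnc2 : {y ∈ C | G.dist x y = i + 1}.ncard
          = ((Finset.univ.filter (fun y => y ∈ C)).filter
            (fun y => G.dist x y = i + 1)).card := by
        have he : {y ∈ C | G.dist x y = i + 1}
            = ↑((Finset.univ.filter (fun y => y ∈ C)).filter
              (fun y => G.dist x y = i + 1)) := by
          ext z
          simp [Set.mem_sep_iff]
        rw [he, Set.ncard_coe_finset]
      constructor
      · rw [hnc1]
        simp only [hsp]
        rw [dif_pos hex]
        exact huniq.1
      · rw [hnc2]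
        simp only [hsm]
        rw [dif_pos (show ∃ p : V × Set V, Cond (i + 1 - 1) p from hex)]
        exact huniq.2

end CliqueBitrade
end

section
/- Let Γ be a distance-regular graph of diameter D with intersection numbers b_i, c_i (and a_i = k − b_i − c_i where k = b_0), and let f be an eigenfunction of Γ with eigenvalue θ. Then the number of vertices on which f is nonzero is at least Σ_{i=0}^{D} |W^i_{A,θ}|, where W^0_{A,θ} = 1, W^1_{A,θ} = θ, and W^i_{A,θ} = ((θ − a_{i−1})·W^{i−1}_{A,θ} − b_{i−2}·W^{i−2}_{A,θ})/c_i for 2 ≤ i ≤ D. -/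
open scoped Classical

namespace CliqueBitrade

variable {V : Type*}

private lemma ncard_filter_eq [Fintype V] (p : V → Prop) :
    {z : V | p z}.ncard = (Finset.univ.filter p).card := by
  rw [Set.ncard_eq_toFinset_card', Set.toFinset_setOf]

private lemma exists_penult (G : SimpleGraph V) (hconn : G.Connected) {u v : V} {j : ℕ}
    (h : G.dist u v = j + 1) : ∃ w, G.Adj v w ∧ G.dist u w = j := by
  obtain ⟨p, hp⟩ := hconn.exists_walk_length_eq_dist v u
  rw [SimpleGraph.dist_comm, h] at hp
  cases p with
  | nil => simp at hp
  | cons hadj q =>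
    rename_i w
    refine ⟨w, hadj, le_antisymm ?_ ?_⟩
    · have h1 : G.dist w u ≤ q.length := SimpleGraph.dist_le q
      have hlen : q.length = j := by simpa using hp
      rw [SimpleGraph.dist_comm]
      omega
    · have htri := hconn.dist_triangle (u := u) (v := w) (w := v)
      have h1 : G.dist w v = 1 := SimpleGraph.dist_eq_one_iff_adj.mpr hadj.symm
      omega

private lemma exists_pair_dist (G : SimpleGraph V) (hconn : G.Connected) :
    ∀ n : ℕ, (∃ u v : V, G.dist u v = n) → ∀ j, j ≤ n → ∃ u v : V, G.dist u v = j := by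
  intro n
  induction n with
  | zero => intro h j hj; rw [Nat.le_zero] at hj; subst hj; exact h
  | succ n ih =>
    rintro ⟨u, v, huv⟩ j hj
    rcases Nat.eq_or_lt_of_le hj with rfl | hlt
    · exact ⟨u, v, huv⟩
    · obtain ⟨w, _, hw⟩ := exists_penult G hconn huv
      exact ih ⟨u, w, hw⟩ j (Nat.lt_succ_iff.mp hlt)



private lemma count_up [Fintype V] {G : SimpleGraph V} {D : ℕ} {b c : ℕ → ℕ}
    (hcount : ∀ i ≤ D, ∀ x y : V, G.dist x y = i →
      {z : V | G.Adj y z ∧ G.dist x z = i + 1}.ncard = b i ∧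
      (1 ≤ i → {z : V | G.Adj y z ∧ G.dist x z = i - 1}.ncard = c i))
    {x z : V} {j : ℕ} (hj : j ≤ D) (hz : G.dist x z = j) :
    (Finset.univ.filter fun w => G.Adj z w ∧ G.dist x w = j + 1).card = b j := by
  have h := (hcount j hj x z hz).1
  rw [ncard_filter_eq] at h
  convert h using 2
  ext w
  simp [Finset.mem_filter]

private lemma count_down [Fintype V] {G : SimpleGraph V} {D : ℕ} {b c : ℕ → ℕ}
    (hcount : ∀ i ≤ D, ∀ x y : V, G.dist x y = i →
      {z : V | G.Adj y z ∧ G.dist x z = i + 1}.ncard = b i ∧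
      (1 ≤ i → {z : V | G.Adj y z ∧ G.dist x z = i - 1}.ncard = c i))
    {x z : V} {j : ℕ} (hj : j ≤ D) (h1 : 1 ≤ j) (hz : G.dist x z = j) :
    (Finset.univ.filter fun w => G.Adj z w ∧ G.dist x w = j - 1).card = c j := by
  have h := (hcount j hj x z hz).2 h1
  rw [ncard_filter_eq] at h
  convert h using 2
  ext w
  simp [Finset.mem_filter]

private lemma count_zero [Fintype V] {G : SimpleGraph V} (hconn : G.Connected)
    {x z : V} {i : ℕ} (h : i + 1 < G.dist x z ∨ G.dist x z + 1 < i) :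
    (Finset.univ.filter fun w => G.Adj z w ∧ G.dist x w = i) = ∅ := by
  rw [Finset.filter_eq_empty_iff]
  rintro w - ⟨hadj, hw⟩
  have t1 := hconn.dist_triangle (u := x) (v := z) (w := w)
  have t2 := hconn.dist_triangle (u := x) (v := w) (w := z)
  have e1 : G.dist z w = 1 := SimpleGraph.dist_eq_one_iff_adj.mpr hadj
  have e2 : G.dist w z = 1 := SimpleGraph.dist_eq_one_iff_adj.mpr hadj.symm
  omega

private lemma count_mid [Fintype V] {G : SimpleGraph V} {D k : ℕ} {b c : ℕ → ℕ}
    (hconn : G.Connected)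
    (hcount : ∀ i ≤ D, ∀ x y : V, G.dist x y = i →
      {z : V | G.Adj y z ∧ G.dist x z = i + 1}.ncard = b i ∧
      (1 ≤ i → {z : V | G.Adj y z ∧ G.dist x z = i - 1}.ncard = c i))
    (hreg : ∀ v : V, (G.neighborSet v).ncard = k)
    {x z : V} {i : ℕ} (h1 : 1 ≤ i) (hiD : i ≤ D) (hz : G.dist x z = i) :
    ((Finset.univ.filter fun w => G.Adj z w ∧ G.dist x w = i).card : ℝ)
      = (k : ℝ) - (b i : ℝ) - (c i : ℝ) := by
  classical
  set F : ℕ → Finset V := fun m => Finset.univ.filter fun w => G.Adj z w ∧ G.dist x w = m with hF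
  have hNcard : (G.neighborFinset z).card = k := by
    rw [SimpleGraph.neighborFinset_def, ← Set.ncard_eq_toFinset_card']
    exact hreg z
  have hsplit : G.neighborFinset z = F (i-1) ∪ F i ∪ F (i+1) := by
    ext w
    simp only [SimpleGraph.mem_neighborFinset, hF, Finset.mem_union, Finset.mem_filter,
      Finset.mem_univ, true_and]
    constructor
    · intro hadj
      have t1 := hconn.dist_triangle (u := x) (v := z) (w := w)
      have t2 := hconn.dist_triangle (u := x) (v := w) (w := z)
      have e1 : G.dist z w = 1 := SimpleGraph.dist_eq_one_iff_adj.mpr hadj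
      have e2 : G.dist w z = 1 := SimpleGraph.dist_eq_one_iff_adj.mpr hadj.symm
      have : G.dist x w = i - 1 ∨ G.dist x w = i ∨ G.dist x w = i + 1 := by omega
      tauto
    · rintro ((⟨h,-⟩|⟨h,-⟩)|⟨h,-⟩) <;> exact h
  have d1 : Disjoint (F (i-1)) (F i) := by
    rw [Finset.disjoint_left]
    intro a ha hb
    simp only [hF, Finset.mem_filter] at ha hb
    omega
  have d2 : Disjoint (F (i-1) ∪ F i) (F (i+1)) := by
    rw [Finset.disjoint_left]
    intro a ha hb
    simp only [hF, Finset.mem_union, Finset.mem_filter] at ha hb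
    omega
  have hcard : k = (F (i-1)).card + (F i).card + (F (i+1)).card := by
    rw [← hNcard, hsplit, Finset.card_union_of_disjoint d2, Finset.card_union_of_disjoint d1]
  have hA : (F (i-1)).card = c i := count_down hcount hiD h1 hz
  have hC : (F (i+1)).card = b i := count_up hcount hiD hz
  rw [hA, hC] at hcard
  have : (c i : ℝ) + ((F i).card : ℝ) + (b i : ℝ) = (k : ℝ) := by exact_mod_cast hcard.symm
  linarith


/-- the weight-distribution bound: In a distance-regular graph
with intersection numbers `b`, `c` (degree `k = b 0`) and diameter `D`, any
eigenfunction `f` with eigenvalue `θ` has at least `Σ_{i=0}^{D} |W^i_{A,θ}|`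
nonzeros. -/
theorem statement12 [Fintype V] (G : SimpleGraph V) (D k : ℕ) (b c : ℕ → ℕ)
    (hdrg : IsDistRegular G D b c) (hreg : IsRegularOfDeg G k) (hk : k = b 0)
    (θ : ℝ) (f : V → ℝ) (hf : IsEigenfunction G θ f)
    (W : ℕ → ℝ) (hW : IsWDCoeffs k b c θ D W) :
    ∑ i ∈ Finset.range (D + 1), |W i| ≤ ({x : V | f x ≠ 0}.ncard : ℝ) := by
  classical
  obtain ⟨hconn, hle, hexD, hbD, hc0, hcount⟩ := hdrg
  obtain ⟨hf0, hfe⟩ := hf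
  obtain ⟨hW0, hW1, hWrec⟩ := hW
  have hfe' : ∀ x : V, ∑ y ∈ G.neighborFinset x, f y = θ * f x := by
    intro x
    rw [← hfe x, ← finsum_mem_coe_finset]
    congr 1
    simp [SimpleGraph.neighborFinset_def]
  obtain ⟨v₀, hv₀⟩ : ∃ v, f v ≠ 0 := Function.ne_iff.mp hf0
  obtain ⟨x₀, -, hx₀⟩ := Finset.exists_max_image (Finset.univ : Finset V) (fun v => |f v|)
    ⟨v₀, Finset.mem_univ _⟩
  have hx₀' : ∀ v : V, |f v| ≤ |f x₀| := fun v => hx₀ v (Finset.mem_univ v)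
  have hfx₀ : 0 < |f x₀| := lt_of_lt_of_le (abs_pos.mpr hv₀) (hx₀' v₀)
  set sph : ℕ → Finset V := fun i => Finset.univ.filter (fun y => G.dist x₀ y = i) with hsph
  set S : ℕ → ℝ := fun i => ∑ y ∈ sph i, f y with hSdef
  -- positivity of c
  have hcpos : ∀ j, 1 ≤ j → j ≤ D → 0 < c j := by
    intro j h1 hjD
    obtain ⟨u, v, huv⟩ := exists_pair_dist G hconn D hexD j hjD
    have hcj := (hcount j hjD u v huv).2 h1
    obtain ⟨j', rfl⟩ : ∃ j', j = j' + 1 := ⟨j - 1, by omega⟩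
    obtain ⟨w, hadj, hw⟩ := exists_penult G hconn huv
    have hmem : w ∈ {z : V | G.Adj v z ∧ G.dist u z = j' + 1 - 1} := ⟨hadj, by simpa using hw⟩
    rw [← hcj]
    exact (Set.ncard_pos (Set.toFinite _)).mpr ⟨w, hmem⟩
  -- base cases
  have hsph0 : sph 0 = {x₀} := by
    ext y
    simp only [hsph, Finset.mem_filter, Finset.mem_univ, true_and, Finset.mem_singleton]
    rw [hconn.dist_eq_zero_iff]
    exact eq_comm
  have hS0 : S 0 = f x₀ := by rw [hSdef]; simp [hsph0]
  have hS1 : S 1 = θ * f x₀ := by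
    rw [← hfe' x₀, hSdef]
    apply Finset.sum_congr _ (fun _ _ => rfl)
    ext y
    simp [hsph, SimpleGraph.mem_neighborFinset, SimpleGraph.dist_eq_one_iff_adj]
  -- the three-term recurrence
  have hrec : ∀ i, 1 ≤ i → i + 1 ≤ D →
      θ * S i = (b (i-1) : ℝ) * S (i-1) + ((k:ℝ) - (b i : ℝ) - (c i : ℝ)) * S i
        + (c (i+1) : ℝ) * S (i+1) := by
    intro i h1 hiD
    set nn : V → ℕ := fun z => (Finset.univ.filter fun w => G.Adj z w ∧ G.dist x₀ w = i).card
      with hnn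
    have step2 : θ * S i = ∑ z : V, (nn z : ℝ) * f z := by
      calc θ * S i = ∑ y ∈ sph i, ∑ z ∈ G.neighborFinset y, f z := by
            rw [hSdef, Finset.mul_sum]
            exact Finset.sum_congr rfl fun y _ => (hfe' y).symm
        _ = ∑ y ∈ sph i, ∑ z : V, if G.Adj y z then f z else 0 := by
            refine Finset.sum_congr rfl fun y _ => ?_
            rw [← Finset.sum_filter]
            apply Finset.sum_congr _ (fun _ _ => rfl)
            ext z
            simp [SimpleGraph.mem_neighborFinset]
        _ = ∑ z : V, ∑ y ∈ sph i, if G.Adj y z then f z else 0 := Finset.sum_comm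
        _ = ∑ z : V, (nn z : ℝ) * f z := by
            refine Finset.sum_congr rfl fun z _ => ?_
            rw [← Finset.sum_filter, Finset.sum_const, nsmul_eq_mul]
            congr 2
            have : (sph i).filter (fun y => G.Adj y z)
                = Finset.univ.filter fun w => G.Adj z w ∧ G.dist x₀ w = i := by
              ext y
              simp only [hsph, Finset.mem_filter, Finset.mem_univ, true_and]
              constructor
              · rintro ⟨hd, ha⟩; exact ⟨ha.symm, hd⟩
              · rintro ⟨ha, hd⟩; exact ⟨hd, ha.symm⟩
            rw [hnn, this]
    have hT : ∀ z : V, z ∉ sph (i-1) ∪ sph i ∪ sph (i+1) → (nn z : ℝ) * f z = 0 := by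
      intro z hz
      have hemp : (Finset.univ.filter fun w => G.Adj z w ∧ G.dist x₀ w = i) = ∅ := by
        apply count_zero hconn
        simp only [hsph, Finset.mem_union, Finset.mem_filter, Finset.mem_univ, true_and,
          not_or] at hz
        omega
      simp [hnn, hemp]
    have step3 : ∑ z : V, (nn z : ℝ) * f z
        = ∑ z ∈ sph (i-1) ∪ sph i ∪ sph (i+1), (nn z : ℝ) * f z :=
      (Finset.sum_subset (Finset.subset_univ _) (fun z _ hz => hT z hz)).symm
    have d1 : Disjoint (sph (i-1)) (sph i) := by
      rw [Finset.disjoint_left]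
      intro a ha hb
      simp only [hsph, Finset.mem_filter, Finset.mem_univ, true_and] at ha hb
      omega
    have d2 : Disjoint (sph (i-1) ∪ sph i) (sph (i+1)) := by
      rw [Finset.disjoint_left]
      intro a ha hb
      simp only [hsph, Finset.mem_union, Finset.mem_filter, Finset.mem_univ, true_and] at ha hb
      omega
    rw [step2, step3, Finset.sum_union d2, Finset.sum_union d1]
    have e1 : ∑ z ∈ sph (i-1), (nn z : ℝ) * f z = (b (i-1) : ℝ) * S (i-1) := by
      rw [hSdef, Finset.mul_sum]
      refine Finset.sum_congr rfl fun z hz => ?_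
      have hzd : G.dist x₀ z = i - 1 := by
        simpa [hsph] using hz
      have hnz : nn z = b (i-1) := by
        have h := count_up hcount (show i - 1 ≤ D by omega) hzd
        rw [hnn]
        have hi : i - 1 + 1 = i := by omega
        rw [hi] at h
        exact h
      rw [hnz]
    have e2 : ∑ z ∈ sph i, (nn z : ℝ) * f z = ((k:ℝ) - (b i : ℝ) - (c i : ℝ)) * S i := by
      rw [hSdef, Finset.mul_sum]
      refine Finset.sum_congr rfl fun z hz => ?_
      have hzd : G.dist x₀ z = i := by simpa [hsph] using hz
      have hnz : (nn z : ℝ) = (k:ℝ) - (b i : ℝ) - (c i : ℝ) :=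
        count_mid hconn hcount hreg h1 (by omega) hzd
      rw [hnz]
    have e3 : ∑ z ∈ sph (i+1), (nn z : ℝ) * f z = (c (i+1) : ℝ) * S (i+1) := by
      rw [hSdef, Finset.mul_sum]
      refine Finset.sum_congr rfl fun z hz => ?_
      have hzd : G.dist x₀ z = i + 1 := by simpa [hsph] using hz
      have hnz : nn z = c (i+1) := by
        have h := count_down hcount hiD (by omega) hzd
        rw [hnn]
        have hi : i + 1 - 1 = i := by omega
        rw [hi] at h
        exact h
      rw [hnz]
    rw [e1, e2, e3]
  -- S i = W i * f x₀
  have hSW : ∀ i, i ≤ D → S i = W i * f x₀ := by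
    intro i
    induction i using Nat.strong_induction_on with
    | _ i ih =>
      intro hiD
      match i, ih, hiD with
      | 0, ih, hiD => rw [hS0, hW0, one_mul]
      | 1, ih, hiD => rw [hS1, hW1]
      | (n+2), ih, hiD =>
        have hWr := hWrec (n+2) (by omega) hiD
        have hrec' := hrec (n+1) (by omega) (by omega)
        have hSn : S n = W n * f x₀ := ih n (by omega) (by omega)
        have hSn1 : S (n+1) = W (n+1) * f x₀ := ih (n+1) (by omega) (by omega)
        have hc2 : (0:ℝ) < (c (n+2) : ℝ) := by
          exact_mod_cast hcpos (n+2) (by omega) hiD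
        have h21 : n + 2 - 1 = n + 1 := rfl
        have h22 : n + 2 - 2 = n := rfl
        have h11 : n + 1 - 1 = n := rfl
        rw [h21, h22] at hWr
        rw [h11] at hrec'
        rw [hSn, hSn1] at hrec'
        rw [hWr, div_mul_eq_mul_div, eq_div_iff (ne_of_gt hc2)]
        linear_combination -hrec'
  -- per-sphere lower bound on nonzeros
  set NZ : Finset V := Finset.univ.filter (fun y => f y ≠ 0) with hNZ
  have key2 : ∀ i, i ≤ D → |W i| ≤ ((NZ.filter fun y => G.dist x₀ y = i).card : ℝ) := by
    intro i hiD
    refine le_of_mul_le_mul_right ?_ hfx₀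
    have h1 : |W i| * |f x₀| = |S i| := by rw [hSW i hiD, abs_mul]
    rw [h1]
    calc |S i| ≤ ∑ y ∈ sph i, |f y| := Finset.abs_sum_le_sum_abs _ _
      _ = ∑ y ∈ (sph i).filter (fun y => f y ≠ 0), |f y| := by
          refine (Finset.sum_filter_of_ne ?_).symm
          intro y _ hy
          simpa using fun h => hy (by rw [h]; simp)
      _ ≤ ∑ _y ∈ (sph i).filter (fun y => f y ≠ 0), |f x₀| :=
          Finset.sum_le_sum fun y _ => hx₀' y
      _ = (((sph i).filter (fun y => f y ≠ 0)).card : ℝ) * |f x₀| := by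
          rw [Finset.sum_const, nsmul_eq_mul]
      _ = ((NZ.filter fun y => G.dist x₀ y = i).card : ℝ) * |f x₀| := by
          have hfe : (sph i).filter (fun y => f y ≠ 0) = NZ.filter fun y => G.dist x₀ y = i := by
            ext y
            simp only [hsph, hNZ, Finset.mem_filter, Finset.mem_univ, true_and]
            tauto
          rw [hfe]
  -- assemble
  have hcard : {x : V | f x ≠ 0}.ncard = NZ.card := by
    have h := ncard_filter_eq (fun x : V => f x ≠ 0)
    rw [h]
    congr 1
    ext y
    simp [hNZ]
  rw [hcard]
  have hfib : NZ.card = ∑ i ∈ Finset.range (D+1), (NZ.filter fun y => G.dist x₀ y = i).card :=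
    Finset.card_eq_sum_card_fiberwise
      (fun y _ => Finset.mem_range.mpr (Nat.lt_succ_of_le (hle x₀ y)))
  rw [hfib]
  push_cast
  exact Finset.sum_le_sum fun i hi => key2 i (Nat.lt_succ_iff.mp (Finset.mem_range.mp hi))

end CliqueBitrade
end
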